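/- arXiv:2012.14641 — 4 statements merged into one kernel-verified Lean document; each statement's English description precedes it below -/
import Mathlib

section
/- For every generalized pseudometric space X, the functor X × − : PMet → PMet preserves filtered colimits. -/
open CategoryTheory CategoryTheory.Limits

/-- The category of generalized (extended-real-valued) metric spaces with
nonexpanding (1-Lipschitz) maps. -/
structure MetCat : Type 1 where
  carrier : Type
  [str : EMetricSpace carrier]

attribute [instance] MetCat.str

instance : CoeSort MetCat Type := ⟨MetCat.carrier⟩

instance : Category MetCat where
  Hom X Y := {f : X.carrier → Y.carrier // LipschitzWith 1 f}
  id X := ⟨id, LipschitzWith.id⟩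
  comp f g := ⟨g.1 ∘ f.1, (by simpa using g.2.comp f.2)⟩

/-- The category of generalized pseudometric spaces with nonexpanding maps. -/
structure PMetCat : Type 1 where
  carrier : Type
  [str : PseudoEMetricSpace carrier]

attribute [instance] PMetCat.str

instance : CoeSort PMetCat Type := ⟨PMetCat.carrier⟩

instance : Category PMetCat where
  Hom X Y := {f : X.carrier → Y.carrier // LipschitzWith 1 f}
  id X := ⟨id, LipschitzWith.id⟩
  comp f g := ⟨g.1 ∘ f.1, (by simpa using g.2.comp f.2)⟩

/-- The full inclusion of metric spaces into pseudometric spaces. -/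
def metToPMet : MetCat ⥤ PMetCat where
  obj X := ⟨X.carrier⟩
  map f := ⟨f.1, f.2⟩

/-- The functor `X × - : PMet ⥤ PMet` (products carry the sup-metric). -/
def PMetCat.prodFunctor (X : PMetCat) : PMetCat ⥤ PMetCat where
  obj Y := ⟨X.carrier × Y.carrier⟩
  map f := ⟨Prod.map id f.1, LipschitzWith.of_edist_le fun p q => by
    simp only [Prod.edist_eq, Prod.map_fst, Prod.map_snd, Prod.map]
    exact max_le_max le_rfl (by simpa using f.2.edist_le_mul _ _)⟩

/-! ### Auxiliary constructions for filtered colimits in `PMetCat` -/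

namespace PMetColim

open scoped ENNReal

lemma hom_nonexp {Y Z : PMetCat} (f : Y ⟶ Z) (a b : Y.carrier) :
    edist (f.1 a) (f.1 b) ≤ edist a b := by
  simpa using f.2.edist_le_mul a b

variable {J : Type} [SmallCategory J] [IsFiltered J] (F : J ⥤ PMetCat)

/-- Elements of the colimit before quotienting. -/
abbrev Pt := Σ j : J, (F.obj j).carrier

@[simp] lemma comp_apply' {Y Z W : PMetCat} (f : Y ⟶ Z) (g : Z ⟶ W) (x : Y.carrier) :
    (f ≫ g).1 x = g.1 (f.1 x) := rfl

lemma map_comp_apply {j k l : J} (f : j ⟶ k) (g : k ⟶ l) (x : (F.obj j).carrier) :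
    (F.map (f ≫ g)).1 x = (F.map g).1 ((F.map f).1 x) := by
  rw [F.map_comp]; rfl

lemma map_id_apply {j : J} (x : (F.obj j).carrier) : (F.map (𝟙 j)).1 x = x := by
  rw [F.map_id]; rfl

/-- The relation identifying points of the colimit. -/
def ColRel (p q : Pt F) : Prop :=
  ∃ (l : J) (f : p.1 ⟶ l) (g : q.1 ⟶ l), (F.map f).1 p.2 = (F.map g).1 q.2

/-- Candidate cospans used in the infimum defining the colimit metric. -/
def Cand (p q : Pt F) : Type := Σ l : J, (p.1 ⟶ l) × (q.1 ⟶ l)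

instance (p q : Pt F) : Nonempty (Cand F p q) :=
  ⟨⟨IsFiltered.max p.1 q.1, IsFiltered.leftToMax _ _, IsFiltered.rightToMax _ _⟩⟩

/-- The value of a candidate. -/
def cval (p q : Pt F) (c : Cand F p q) : ℝ≥0∞ :=
  edist ((F.map c.2.1).1 p.2) ((F.map c.2.2).1 q.2)

/-- The colimit pseudometric, on the un-quotiented sigma type. -/
noncomputable def sd (p q : Pt F) : ℝ≥0∞ := ⨅ c : Cand F p q, cval F p q c

lemma sd_le (p q : Pt F) (c : Cand F p q) : sd F p q ≤ cval F p q c := iInf_le _ c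

lemma le_sd (p q : Pt F) (e : ℝ≥0∞) (h : ∀ c : Cand F p q, e ≤ cval F p q c) :
    e ≤ sd F p q := le_iInf h

lemma sd_self (p : Pt F) : sd F p p = 0 := by
  refine le_antisymm ?_ zero_le
  have := sd_le F p p ⟨p.1, 𝟙 p.1, 𝟙 p.1⟩
  simpa [cval] using this

lemma sd_comm (p q : Pt F) : sd F p q = sd F q p := by
  have h : ∀ a b : Pt F, sd F a b ≤ sd F b a := by
    intro a b
    refine le_sd F b a _ (fun c => ?_)
    have := sd_le F a b ⟨c.1, c.2.2, c.2.1⟩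
    simpa [cval, edist_comm] using this
  exact le_antisymm (h p q) (h q p)

lemma sd_triangle (p q r : Pt F) : sd F p r ≤ sd F p q + sd F q r := by
  have hrw : sd F p q + sd F q r
      = ⨅ c1 : Cand F p q, ⨅ c2 : Cand F q r, cval F p q c1 + cval F q r c2 := by
    rw [sd, sd, ENNReal.iInf_add]
    refine iInf_congr fun c1 => ?_
    rw [ENNReal.add_iInf]
  rw [hrw]
  refine le_iInf fun c1 => le_iInf fun c2 => ?_
  obtain ⟨l, f, g⟩ := c1
  obtain ⟨l', f', g'⟩ := c2
  -- combine the two cospans over a common object, coequalizing the two legs from `q.1`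
  set n := IsFiltered.max l l'
  set u : l ⟶ n := IsFiltered.leftToMax _ _
  set v : l' ⟶ n := IsFiltered.rightToMax _ _
  set w : n ⟶ IsFiltered.coeq (g ≫ u) (f' ≫ v) := IsFiltered.coeqHom (g ≫ u) (f' ≫ v)
  have hcoeq : (g ≫ u) ≫ w = (f' ≫ v) ≫ w := IsFiltered.coeq_condition _ _
  refine le_trans (sd_le F p r ⟨_, f ≫ u ≫ w, g' ≫ v ≫ w⟩) ?_
  have key : (F.map w).1 ((F.map u).1 ((F.map g).1 q.2))
      = (F.map w).1 ((F.map v).1 ((F.map f').1 q.2)) := by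
    have h2 : (F.map ((g ≫ u) ≫ w)).1 q.2 = (F.map ((f' ≫ v) ≫ w)).1 q.2 := by rw [hcoeq]
    simpa [map_comp_apply] using h2
  calc cval F p r ⟨_, f ≫ u ≫ w, g' ≫ v ≫ w⟩
      = edist ((F.map w).1 ((F.map u).1 ((F.map f).1 p.2)))
          ((F.map w).1 ((F.map v).1 ((F.map g').1 r.2))) := by
        simp [cval, map_comp_apply, comp_apply']
    _ ≤ edist ((F.map w).1 ((F.map u).1 ((F.map f).1 p.2)))
          ((F.map w).1 ((F.map u).1 ((F.map g).1 q.2)))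
        + edist ((F.map w).1 ((F.map v).1 ((F.map f').1 q.2)))
          ((F.map w).1 ((F.map v).1 ((F.map g').1 r.2))) := by
        refine le_trans (edist_triangle _ ((F.map w).1 ((F.map u).1 ((F.map g).1 q.2))) _) ?_
        rw [key]
    _ ≤ edist ((F.map f).1 p.2) ((F.map g).1 q.2) + edist ((F.map f').1 q.2) ((F.map g').1 r.2) :=
        add_le_add (le_trans (hom_nonexp (F.map w) _ _) (hom_nonexp (F.map u) _ _))
          (le_trans (hom_nonexp (F.map w) _ _) (hom_nonexp (F.map v) _ _))

/-- `sd` only depends on the `ColRel`-class of the first argument. -/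
lemma sd_congr_left {p p' : Pt F} (h : ColRel F p p') (q : Pt F) : sd F p q = sd F p' q := by
  have main : ∀ a a' : Pt F, ColRel F a a' → sd F a q ≤ sd F a' q := by
    rintro a a' ⟨m, u, v, huv⟩
    refine le_sd F a' q _ (fun c => ?_)
    obtain ⟨l, f, g⟩ := c
    set n := IsFiltered.max m l
    set s : m ⟶ n := IsFiltered.leftToMax _ _
    set t : l ⟶ n := IsFiltered.rightToMax _ _
    set w : n ⟶ IsFiltered.coeq (v ≫ s) (f ≫ t) := IsFiltered.coeqHom (v ≫ s) (f ≫ t)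
    have hcoeq : (v ≫ s) ≫ w = (f ≫ t) ≫ w := IsFiltered.coeq_condition _ _
    refine le_trans (sd_le F a q ⟨_, u ≫ s ≫ w, g ≫ t ≫ w⟩) ?_
    have key : (F.map w).1 ((F.map s).1 ((F.map v).1 a'.2))
        = (F.map w).1 ((F.map t).1 ((F.map f).1 a'.2)) := by
      have h2 : (F.map ((v ≫ s) ≫ w)).1 a'.2 = (F.map ((f ≫ t) ≫ w)).1 a'.2 := by rw [hcoeq]
      simpa [map_comp_apply] using h2
    calc cval F a q ⟨_, u ≫ s ≫ w, g ≫ t ≫ w⟩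
        = edist ((F.map w).1 ((F.map t).1 ((F.map f).1 a'.2)))
            ((F.map w).1 ((F.map t).1 ((F.map g).1 q.2))) := by
          simp only [cval, map_comp_apply]
          rw [huv, key]
      _ ≤ edist ((F.map f).1 a'.2) ((F.map g).1 q.2) :=
          le_trans (hom_nonexp (F.map w) _ _) (hom_nonexp (F.map t) _ _)
      _ = cval F a' q ⟨l, f, g⟩ := rfl
  have hsymm : ColRel F p' p := by
    obtain ⟨m, u, v, huv⟩ := h; exact ⟨m, v, u, huv.symm⟩
  exact le_antisymm (main p p' h) (main p' p hsymm)

lemma sd_congr_right (p : Pt F) {q q' : Pt F} (h : ColRel F q q') : sd F p q = sd F p q' := by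
  rw [sd_comm, sd_congr_left F h, sd_comm]

/-- The underlying type of the colimit. -/
def ColPt : Type := Quot (ColRel F)

noncomputable instance : PseudoEMetricSpace (ColPt F) where
  edist := Quot.lift (fun p => Quot.lift (sd F p) (fun _ _ h => sd_congr_right F p h))
    (fun p p' h => funext <| Quot.ind fun q => sd_congr_left F h q)
  edist_self := Quot.ind fun p => sd_self F p
  edist_comm := Quot.ind fun p => Quot.ind fun q => sd_comm F p q
  edist_triangle := Quot.ind fun p => Quot.ind fun q => Quot.ind fun r => sd_triangle F p q r

lemma colPt_edist (p q : Pt F) :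
    edist (α := ColPt F) (Quot.mk (ColRel F) p) (Quot.mk (ColRel F) q) = sd F p q := rfl

/-- The colimit object. -/
noncomputable def colObj : PMetCat := ⟨ColPt F⟩

/-- The colimit cocone. -/
noncomputable def colCocone : Cocone F where
  pt := colObj F
  ι :=
    { app := fun j => ⟨fun x => Quot.mk _ ⟨j, x⟩, LipschitzWith.of_edist_le fun x y => by
        show sd F ⟨j, x⟩ ⟨j, y⟩ ≤ _
        have := sd_le F ⟨j, x⟩ ⟨j, y⟩ ⟨j, 𝟙 j, 𝟙 j⟩
        simp only [cval, map_id_apply] at this; exact this⟩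
      naturality := fun j k f => Subtype.ext <| funext fun x => by
        refine Quot.sound ⟨k, 𝟙 k, f, ?_⟩
        rw [map_id_apply] }

/-- The colimit cocone is a colimit. -/
noncomputable def colIsColimit : IsColimit (colCocone F) where
  desc s :=
    ⟨Quot.lift (fun p => (s.ι.app p.1).1 p.2) (by
        rintro p q ⟨l, f, g, h⟩
        have hp : (s.ι.app p.1).1 p.2 = (s.ι.app l).1 ((F.map f).1 p.2) := by
          exact (congrFun (congrArg Subtype.val (s.ι.naturality f)) p.2).symm
        have hq : (s.ι.app q.1).1 q.2 = (s.ι.app l).1 ((F.map g).1 q.2) := by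
          exact (congrFun (congrArg Subtype.val (s.ι.naturality g)) q.2).symm
        show (s.ι.app p.1).1 p.2 = (s.ι.app q.1).1 q.2
        rw [hp, hq, h]),
      LipschitzWith.of_edist_le <| Quot.ind fun p => Quot.ind fun q => by
        show _ ≤ sd F p q
        refine le_sd F p q _ (fun c => ?_)
        obtain ⟨l, f, g⟩ := c
        have hp : (s.ι.app p.1).1 p.2 = (s.ι.app l).1 ((F.map f).1 p.2) := by
          exact (congrFun (congrArg Subtype.val (s.ι.naturality f)) p.2).symm
        have hq : (s.ι.app q.1).1 q.2 = (s.ι.app l).1 ((F.map g).1 q.2) := by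
          exact (congrFun (congrArg Subtype.val (s.ι.naturality g)) q.2).symm
        show edist ((s.ι.app p.1).1 p.2) ((s.ι.app q.1).1 q.2) ≤ cval F p q ⟨l, f, g⟩
        rw [hp, hq]
        exact hom_nonexp _ _ _⟩
  fac s j := Subtype.ext <| funext fun x => rfl
  uniq s m w := Subtype.ext <| funext <| Quot.ind fun p => by
    exact congrFun (congrArg Subtype.val (w p.1)) p.2

variable (X : PMetCat)

/-- The image of the colimit cocone under `X × -` is a colimit. -/
noncomputable def mappedIsColimit :
    IsColimit ((PMetCat.prodFunctor X).mapCocone (colCocone F)) where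
  desc s :=
    ⟨fun xq => Quot.lift (fun p => (s.ι.app p.1).1 (xq.1, p.2)) (by
        rintro p q ⟨l, f, g, h⟩
        have hp : (s.ι.app p.1).1 (xq.1, p.2) = (s.ι.app l).1 (xq.1, (F.map f).1 p.2) := by
          exact (congrFun (congrArg Subtype.val (s.ι.naturality f)) (xq.1, p.2)).symm
        have hq : (s.ι.app q.1).1 (xq.1, q.2) = (s.ι.app l).1 (xq.1, (F.map g).1 q.2) := by
          exact (congrFun (congrArg Subtype.val (s.ι.naturality g)) (xq.1, q.2)).symm
        show (s.ι.app p.1).1 (xq.1, p.2) = (s.ι.app q.1).1 (xq.1, q.2)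
        rw [hp, hq, h]) xq.2,
      LipschitzWith.of_edist_le <| by
        rintro ⟨x, qx⟩ ⟨y, qy⟩
        induction qx using Quot.ind with | _ p => ?_
        induction qy using Quot.ind with | _ q => ?_
        show edist ((s.ι.app p.1).1 (x, p.2)) ((s.ι.app q.1).1 (y, q.2)) ≤ _
        show _ ≤ max (edist x y) (edist (α := ColPt F) (Quot.mk (ColRel F) p) (Quot.mk (ColRel F) q))
        rcases le_or_gt (edist ((s.ι.app p.1).1 (x, p.2)) ((s.ι.app q.1).1 (y, q.2))) (edist x y)
          with hle | hlt
        · exact hle.trans (le_max_left _ _)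
        · refine le_trans ?_ (le_max_right _ _)
          rw [colPt_edist]
          refine le_sd F p q _ (fun c => ?_)
          obtain ⟨l, f, g⟩ := c
          have hp : (s.ι.app p.1).1 (x, p.2) = (s.ι.app l).1 (x, (F.map f).1 p.2) := by
            exact (congrFun (congrArg Subtype.val (s.ι.naturality f)) (x, p.2)).symm
          have hq : (s.ι.app q.1).1 (y, q.2) = (s.ι.app l).1 (y, (F.map g).1 q.2) := by
            exact (congrFun (congrArg Subtype.val (s.ι.naturality g)) (y, q.2)).symm
          have hbound : edist ((s.ι.app p.1).1 (x, p.2)) ((s.ι.app q.1).1 (y, q.2))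
              ≤ max (edist x y) (cval F p q ⟨l, f, g⟩) := by
            rw [hp, hq]
            refine le_trans (hom_nonexp (s.ι.app l) _ _) ?_
            exact le_of_eq (Prod.edist_eq _ _)
          rcases le_max_iff.mp hbound with h1 | h2
          · exact absurd h1 (not_le.mpr hlt)
          · exact h2⟩
  fac s j := by
    refine Subtype.ext (funext fun x => ?_)
    obtain ⟨a, b⟩ := x
    rfl
  uniq s m w := Subtype.ext <| funext <| by
    rintro ⟨x, qx⟩
    induction qx using Quot.ind with | _ p => ?_
    exact congrFun (congrArg Subtype.val (w p.1)) (x, p.2)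

end PMetColim

/-- For every generalized pseudometric space `X`, the functor
`X × - : PMet ⥤ PMet` preserves filtered colimits. -/
theorem prodFunctor_preserves_filtered_colimits (X : PMetCat)
    (J : Type) [SmallCategory J] [IsFiltered J] :
    Nonempty (PreservesColimitsOfShape J (PMetCat.prodFunctor X)) := by
  refine ⟨⟨fun {F} => ?_⟩⟩
  exact preservesColimit_of_preserves_colimit_cocone
    (PMetColim.colIsColimit F) (PMetColim.mappedIsColimit F X)
end

section
/- In the category Met of generalized metric spaces and nonexpanding maps, finite products commute with filtered colimits; that is, for every finite family of filtered diagrams in Met, the canonical comparison map from the colimit of the products to the product of the colimits is an isomorphism. -/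
open CategoryTheory CategoryTheory.Limits

/-- Finite product of generalized metric spaces, with the sup-metric. -/
def MetCat.pi {n : ℕ} (A : Fin n → MetCat) : MetCat := ⟨∀ i, (A i).carrier⟩

/-- The product of a family of nonexpanding maps. -/
def MetCat.piMap {n : ℕ} {A B : Fin n → MetCat} (f : ∀ i, A i ⟶ B i) :
    MetCat.pi A ⟶ MetCat.pi B :=
  ⟨fun x i => (f i).1 (x i), LipschitzWith.of_edist_le fun (x y : ∀ i, (A i).carrier) => by
    show edist (fun i => (f i).1 (x i)) (fun i => (f i).1 (y i)) ≤ edist x y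
    rw [edist_pi_def, edist_pi_def]
    exact Finset.sup_mono_fun fun i _ => by simpa using (f i).2.edist_le_mul (x i) (y i)⟩

/-- The pointwise product of a finite family of diagrams in `Met`. -/
def MetCat.prodDiagram {J : Type} [SmallCategory J] {n : ℕ}
    (F : Fin n → J ⥤ MetCat) : J ⥤ MetCat where
  obj j := MetCat.pi fun i => (F i).obj j
  map h := MetCat.piMap fun i => (F i).map h
  map_id j := by
    apply Subtype.ext
    funext x i
    show ((F i).map (𝟙 j)).1 (x i) = x i
    rw [(F i).map_id]
    rfl
  map_comp h k := by
    apply Subtype.ext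
    funext x i
    show ((F i).map (_ ≫ _)).1 (x i) = ((F i).map k).1 (((F i).map h).1 (x i))
    rw [(F i).map_comp]
    rfl

/-- The product of a family of cocones, a cocone over the product diagram. -/
def MetCat.prodCocone {J : Type} [SmallCategory J] {n : ℕ}
    {F : Fin n → J ⥤ MetCat} (c : ∀ i, Cocone (F i)) : Cocone (MetCat.prodDiagram F) where
  pt := MetCat.pi fun i => (c i).pt
  ι :=
    { app := fun j => MetCat.piMap fun i => (c i).ι.app j
      naturality := fun j k h => by
        apply Subtype.ext
        funext x i
        show ((c i).ι.app k).1 (((F i).map h).1 (x i)) = ((c i).ι.app j).1 (x i)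
        exact congrFun (congrArg Subtype.val ((c i).ι.naturality h)) (x i) }

/-! ### Auxiliary development: explicit filtered colimits in `Met`. -/

namespace MetAux

open SeparationQuotient
open scoped ENNReal

variable {J : Type} [SmallCategory J]

/-- A cospan datum over a pair of objects. -/
structure Sp (J : Type) [SmallCategory J] (j k : J) : Type where
  l : J
  f : j ⟶ l
  g : k ⟶ l

instance [IsFiltered J] (j k : J) : Nonempty (Sp J j k) := by
  obtain ⟨l, f, g, -⟩ := IsFilteredOrEmpty.cocone_objs j k
  exact ⟨⟨l, f, g⟩⟩

@[simp] lemma id_apply {X : MetCat} (z : X.carrier) : (𝟙 X : X ⟶ X).1 z = z := rfl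

lemma hom_edist_le {X Y : MetCat} (h : X ⟶ Y) (a b : X.carrier) :
    edist (h.1 a) (h.1 b) ≤ edist a b := by simpa using h.2 a b

lemma map_comp_apply (F : J ⥤ MetCat) {j k l : J} (f : j ⟶ k) (g : k ⟶ l)
    (x : (F.obj j).carrier) :
    (F.map (f ≫ g)).1 x = (F.map g).1 ((F.map f).1 x) := by rw [F.map_comp]; rfl

@[simp] lemma map_id_apply (F : J ⥤ MetCat) {j : J} (x : (F.obj j).carrier) :
    (F.map (𝟙 j)).1 x = x := by rw [F.map_id]; rfl

/-- Carrier of the presentation of the colimit: the disjoint union of the stages. -/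
structure Pre (F : J ⥤ MetCat) : Type where
  j : J
  x : (F.obj j).carrier

/-- The colimit pseudo-distance on the disjoint union of stages. -/
noncomputable def preDist (F : J ⥤ MetCat) (p q : Pre F) : ℝ≥0∞ :=
  ⨅ s : Sp J p.1 q.1, edist ((F.map s.f).1 p.2) ((F.map s.g).1 q.2)

lemma preDist_le (F : J ⥤ MetCat) (p q : Pre F) (s : Sp J p.1 q.1) :
    preDist F p q ≤ edist ((F.map s.f).1 p.2) ((F.map s.g).1 q.2) :=
  iInf_le _ s

lemma combine [IsFiltered J] {j k : J} (s t : Sp J j k) :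
    ∃ (u : Sp J j k) (a : s.l ⟶ u.l) (b : t.l ⟶ u.l),
      s.f ≫ a = u.f ∧ s.g ≫ a = u.g ∧ t.f ≫ b = u.f ∧ t.g ≫ b = u.g := by
  obtain ⟨c, a0, b0, -⟩ := IsFilteredOrEmpty.cocone_objs s.l t.l
  obtain ⟨d, w, hw⟩ := IsFilteredOrEmpty.cocone_maps (s.f ≫ a0) (t.f ≫ b0)
  obtain ⟨e, w', hw'⟩ := IsFilteredOrEmpty.cocone_maps (s.g ≫ a0 ≫ w) (t.g ≫ b0 ≫ w)
  refine ⟨⟨e, s.f ≫ a0 ≫ w ≫ w', s.g ≫ a0 ≫ w ≫ w'⟩, a0 ≫ w ≫ w', b0 ≫ w ≫ w',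
    rfl, rfl, ?_, ?_⟩
  · show t.f ≫ b0 ≫ w ≫ w' = s.f ≫ a0 ≫ w ≫ w'
    simp only [← Category.assoc] at hw ⊢
    rw [hw]
  · show t.g ≫ b0 ≫ w ≫ w' = s.g ≫ a0 ≫ w ≫ w'
    simp only [← Category.assoc] at hw' ⊢
    rw [hw']

lemma combine3 [IsFiltered J] {j k m : J} (s : Sp J j k) (t : Sp J k m) :
    ∃ (u : Sp J j m) (a : s.l ⟶ u.l) (b : t.l ⟶ u.l),
      s.f ≫ a = u.f ∧ t.g ≫ b = u.g ∧ s.g ≫ a = t.f ≫ b := by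
  obtain ⟨c, a0, b0, -⟩ := IsFilteredOrEmpty.cocone_objs s.l t.l
  obtain ⟨d, w, hw⟩ := IsFilteredOrEmpty.cocone_maps (s.g ≫ a0) (t.f ≫ b0)
  refine ⟨⟨d, s.f ≫ a0 ≫ w, t.g ≫ b0 ≫ w⟩, a0 ≫ w, b0 ≫ w, rfl, rfl, ?_⟩
  show s.g ≫ a0 ≫ w = t.f ≫ b0 ≫ w
  simp only [← Category.assoc] at hw ⊢
  rw [hw]

lemma preDist_triangle [IsFiltered J] (F : J ⥤ MetCat) (p q r : Pre F) :
    preDist F p r ≤ preDist F p q + preDist F q r := by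
  have key : ∀ (s : Sp J p.1 q.1) (t : Sp J q.1 r.1),
      preDist F p r ≤ edist ((F.map s.f).1 p.2) ((F.map s.g).1 q.2)
        + edist ((F.map t.f).1 q.2) ((F.map t.g).1 r.2) := by
    intro s t
    obtain ⟨u, a, b, hf, hg, hm⟩ := combine3 s t
    calc preDist F p r ≤ edist ((F.map u.f).1 p.2) ((F.map u.g).1 r.2) := preDist_le F p r u
      _ ≤ edist ((F.map u.f).1 p.2) ((F.map (s.g ≫ a)).1 q.2)
          + edist ((F.map (s.g ≫ a)).1 q.2) ((F.map u.g).1 r.2) := edist_triangle _ _ _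
      _ ≤ edist ((F.map s.f).1 p.2) ((F.map s.g).1 q.2)
          + edist ((F.map t.f).1 q.2) ((F.map t.g).1 r.2) := by
        rw [← hf, ← hg]
        refine add_le_add ?_ ?_
        · simp only [map_comp_apply]
          exact hom_edist_le (F.map a) _ _
        · rw [hm]
          simp only [map_comp_apply]
          exact hom_edist_le (F.map b) _ _
  have h1 : preDist F p q + preDist F q r
      = ⨅ (s : Sp J p.1 q.1), (edist ((F.map s.f).1 p.2) ((F.map s.g).1 q.2)
          + preDist F q r) := ENNReal.iInf_add
  rw [h1]
  refine le_iInf fun s => ?_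
  have h2 : edist ((F.map s.f).1 p.2) ((F.map s.g).1 q.2) + preDist F q r
      = ⨅ (t : Sp J q.1 r.1), (edist ((F.map s.f).1 p.2) ((F.map s.g).1 q.2)
          + edist ((F.map t.f).1 q.2) ((F.map t.g).1 r.2)) := ENNReal.add_iInf
  rw [h2]
  exact le_iInf fun t => key s t

noncomputable instance preMetric [IsFiltered J] (F : J ⥤ MetCat) :
    PseudoEMetricSpace (Pre F) where
  edist := preDist F
  edist_self p := le_antisymm (by
    have h := preDist_le F p p ⟨p.1, 𝟙 p.1, 𝟙 p.1⟩
    simpa using h) zero_le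
  edist_comm p q := by
    have h1 : ∀ (a b : Pre F), preDist F a b ≤ preDist F b a := fun a b =>
      le_iInf fun s => (preDist_le F a b ⟨s.l, s.g, s.f⟩).trans_eq (edist_comm _ _)
    exact le_antisymm (h1 p q) (h1 q p)
  edist_triangle p q r := preDist_triangle F p q r

lemma edist_pre [IsFiltered J] (F : J ⥤ MetCat) (p q : Pre F) :
    edist p q = preDist F p q := rfl

lemma mk_map [IsFiltered J] (F : J ⥤ MetCat) {j l : J} (u : j ⟶ l) (x : (F.obj j).carrier) :
    SeparationQuotient.mk (⟨l, (F.map u).1 x⟩ : Pre F) = SeparationQuotient.mk ⟨j, x⟩ := by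
  refine SeparationQuotient.mk_eq_mk.mpr (EMetric.inseparable_iff.mpr ?_)
  refine le_antisymm ?_ zero_le
  have h := preDist_le F ⟨l, (F.map u).1 x⟩ ⟨j, x⟩ ⟨l, 𝟙 l, u⟩
  rw [edist_pre]
  simpa using h

/-- The explicit colimit cocone of a filtered diagram in `Met`. -/
noncomputable def colimitCocone [IsFiltered J] (F : J ⥤ MetCat) : Cocone F where
  pt := ⟨SeparationQuotient (Pre F)⟩
  ι :=
    { app := fun j => ⟨fun x => SeparationQuotient.mk (⟨j, x⟩ : Pre F),
        LipschitzWith.of_edist_le fun x y => by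
          rw [SeparationQuotient.edist_mk, edist_pre]
          have h := preDist_le F ⟨j, x⟩ ⟨j, y⟩ ⟨j, 𝟙 j, 𝟙 j⟩
          simpa using h⟩
      naturality := fun j k h => by
        apply Subtype.ext
        funext x
        show SeparationQuotient.mk (⟨k, (F.map h).1 x⟩ : Pre F) = SeparationQuotient.mk ⟨j, x⟩
        exact mk_map F h x }

lemma desc_le [IsFiltered J] {F : J ⥤ MetCat} (s : Cocone F) (p q : Pre F) :
    edist ((s.ι.app p.1).1 p.2) ((s.ι.app q.1).1 q.2) ≤ preDist F p q := by
  refine le_iInf fun t => ?_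
  have h1 : (s.ι.app t.l).1 ((F.map t.f).1 p.2) = (s.ι.app p.1).1 p.2 :=
    congrFun (congrArg Subtype.val (s.ι.naturality t.f)) p.2
  have h2 : (s.ι.app t.l).1 ((F.map t.g).1 q.2) = (s.ι.app q.1).1 q.2 :=
    congrFun (congrArg Subtype.val (s.ι.naturality t.g)) q.2
  calc edist ((s.ι.app p.1).1 p.2) ((s.ι.app q.1).1 q.2)
      = edist ((s.ι.app t.l).1 ((F.map t.f).1 p.2)) ((s.ι.app t.l).1 ((F.map t.g).1 q.2)) := by
        rw [h1, h2]
    _ ≤ edist ((F.map t.f).1 p.2) ((F.map t.g).1 q.2) := hom_edist_le (s.ι.app t.l) _ _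

/-- The explicit cocone is a colimit. -/
noncomputable def colimitIsColimit [IsFiltered J] (F : J ⥤ MetCat) :
    IsColimit (colimitCocone F) where
  desc s := ⟨SeparationQuotient.lift (fun p : Pre F => (s.ι.app p.1).1 p.2)
      (fun p q h => by
        have h0 : edist p q = 0 := EMetric.inseparable_iff.mp h
        rw [edist_pre] at h0
        exact eq_of_edist_eq_zero
          (le_antisymm ((desc_le s p q).trans (le_of_eq h0)) zero_le)),
    LipschitzWith.of_edist_le fun (x y : SeparationQuotient (Pre F)) => by
      obtain ⟨p, rfl⟩ := surjective_mk x
      obtain ⟨q, rfl⟩ := surjective_mk y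
      refine le_of_le_of_eq ?_ (SeparationQuotient.edist_mk p q).symm
      rw [edist_pre]
      exact desc_le s p q⟩
  fac s j := by
    apply Subtype.ext
    funext x
    rfl
  uniq s m w := by
    apply Subtype.ext
    funext x
    obtain ⟨p, rfl⟩ := surjective_mk x
    have h1 : m.1 (SeparationQuotient.mk p) = (s.ι.app p.1).1 p.2 :=
      congrFun (congrArg Subtype.val (w p.1)) p.2
    exact h1

/-! ### Commuting finite products with the explicit colimits -/

lemma phi_le [IsFiltered J] {n : ℕ} (F : Fin n → J ⥤ MetCat)
    (p q : Pre (MetCat.prodDiagram F)) (i : Fin n) :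
    preDist (F i) ⟨p.1, p.2 i⟩ ⟨q.1, q.2 i⟩ ≤ preDist (MetCat.prodDiagram F) p q := by
  refine iInf_mono fun t => ?_
  have h : edist (((MetCat.prodDiagram F).map t.f).1 p.2) (((MetCat.prodDiagram F).map t.g).1 q.2)
      = Finset.sup Finset.univ
          (fun i => edist ((((MetCat.prodDiagram F).map t.f).1 p.2) i)
            ((((MetCat.prodDiagram F).map t.g).1 q.2) i)) := edist_pi_def _ _
  refine le_trans (Finset.le_sup
    (f := fun i' => edist ((((MetCat.prodDiagram F).map t.f).1 p.2) i')
      ((((MetCat.prodDiagram F).map t.g).1 q.2) i')) (Finset.mem_univ i)) (le_of_eq h.symm)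

lemma sup_cospans [IsFiltered J] {j k : J} : ∀ (m : ℕ) (σ : Fin m → Sp J j k),
    ∃ u : Sp J j k, ∀ i, ∃ w : (σ i).l ⟶ u.l, (σ i).f ≫ w = u.f ∧ (σ i).g ≫ w = u.g
  | 0, σ => ⟨Classical.arbitrary _, fun i => i.elim0⟩
  | (m + 1), σ => by
    obtain ⟨u', hu'⟩ := sup_cospans m (σ ∘ Fin.succ)
    obtain ⟨u, a, b, h1, h2, h3, h4⟩ := combine u' (σ 0)
    refine ⟨u, fun i => ?_⟩
    refine Fin.cases ⟨b, h3, h4⟩ (fun i' => ?_) i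
    obtain ⟨w, hw1, hw2⟩ := hu' i'
    have hw1' : (σ i'.succ).f ≫ w = u'.f := hw1
    have hw2' : (σ i'.succ).g ≫ w = u'.g := hw2
    exact ⟨w ≫ a, by rw [← Category.assoc, hw1', h1], by rw [← Category.assoc, hw2', h2]⟩

lemma preDist_prod_le [IsFiltered J] {n : ℕ} (F : Fin n → J ⥤ MetCat)
    (p q : Pre (MetCat.prodDiagram F)) :
    preDist (MetCat.prodDiagram F) p q ≤
      Finset.sup Finset.univ (fun i => preDist (F i) ⟨p.1, p.2 i⟩ ⟨q.1, q.2 i⟩) := by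
  refine le_of_forall_gt_imp_ge_of_dense fun b hb => ?_
  have hib : ∀ i, ∃ s : Sp J p.1 q.1,
      edist (((F i).map s.f).1 (p.2 i)) (((F i).map s.g).1 (q.2 i)) < b := by
    intro i
    have hlt : preDist (F i) ⟨p.1, p.2 i⟩ ⟨q.1, q.2 i⟩ < b :=
      lt_of_le_of_lt (Finset.le_sup
        (f := fun i => preDist (F i) ⟨p.1, p.2 i⟩ ⟨q.1, q.2 i⟩) (Finset.mem_univ i)) hb
    exact iInf_lt_iff.mp hlt
  choose σ hσ using hib
  obtain ⟨u, hu⟩ := sup_cospans n σ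
  refine le_trans (preDist_le _ p q u) ?_
  refine (edist_pi_def _ _).trans_le ?_
  refine Finset.sup_le fun i _ => ?_
  obtain ⟨w, hw1, hw2⟩ := hu i
  have h : edist (((F i).map u.f).1 (p.2 i)) (((F i).map u.g).1 (q.2 i))
      ≤ edist (((F i).map (σ i).f).1 (p.2 i)) (((F i).map (σ i).g).1 (q.2 i)) := by
    rw [← hw1, ← hw2, map_comp_apply, map_comp_apply]
    exact hom_edist_le ((F i).map w) _ _
  exact le_trans h (le_of_lt (hσ i))

variable [IsFiltered J] {n : ℕ} (F : Fin n → J ⥤ MetCat)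

/-- The comparison map from the explicit colimit of the product diagram to the product
of the explicit colimits. -/
noncomputable def phi :
    SeparationQuotient (Pre (MetCat.prodDiagram F)) → ∀ i, SeparationQuotient (Pre (F i)) :=
  SeparationQuotient.lift
    (fun p => fun i => SeparationQuotient.mk (⟨p.1, p.2 i⟩ : Pre (F i)))
    (fun p q h => by
      have h0 : edist p q = 0 := EMetric.inseparable_iff.mp h
      rw [edist_pre] at h0
      funext i
      refine SeparationQuotient.mk_eq_mk.mpr (EMetric.inseparable_iff.mpr ?_)
      rw [edist_pre]
      exact le_antisymm ((phi_le F p q i).trans (le_of_eq h0)) zero_le)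

@[simp] lemma phi_mk (p : Pre (MetCat.prodDiagram F)) :
    phi F (SeparationQuotient.mk p) = fun i => SeparationQuotient.mk (⟨p.1, p.2 i⟩ : Pre (F i)) :=
  SeparationQuotient.lift_mk _ _

lemma phi_edist (x y : SeparationQuotient (Pre (MetCat.prodDiagram F))) :
    edist (phi F x) (phi F y) = edist x y := by
  obtain ⟨p, rfl⟩ := surjective_mk x
  obtain ⟨q, rfl⟩ := surjective_mk y
  rw [phi_mk, phi_mk, SeparationQuotient.edist_mk, edist_pre, edist_pi_def]
  have h : ∀ i, edist (SeparationQuotient.mk (⟨p.1, p.2 i⟩ : Pre (F i)))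
      (SeparationQuotient.mk (⟨q.1, q.2 i⟩ : Pre (F i)))
      = preDist (F i) ⟨p.1, p.2 i⟩ ⟨q.1, q.2 i⟩ := fun i => SeparationQuotient.edist_mk _ _
  refine le_antisymm (Finset.sup_le fun i _ => ?_) ?_
  · rw [h i]
    exact phi_le F p q i
  · refine (preDist_prod_le F p q).trans (le_of_eq ?_)
    exact Finset.sup_congr rfl fun i _ => (h i).symm

lemma sup_objs : ∀ (m : ℕ) (o : Fin m → J), ∃ l : J, ∀ i, Nonempty (o i ⟶ l)
  | 0, o => ⟨IsFiltered.nonempty.some, fun i => i.elim0⟩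
  | (m + 1), o => by
    obtain ⟨l', hl'⟩ := sup_objs m (o ∘ Fin.succ)
    obtain ⟨l, f, g, -⟩ := IsFilteredOrEmpty.cocone_objs l' (o 0)
    exact ⟨l, fun i => Fin.cases ⟨g⟩ (fun i' => ⟨(hl' i').some ≫ f⟩) i⟩

lemma phi_surjective : Function.Surjective (phi F) := by
  intro y
  have hy : ∀ i, ∃ p : Pre (F i), SeparationQuotient.mk p = y i := fun i => surjective_mk (y i)
  choose p hp using hy
  obtain ⟨l, hl⟩ := sup_objs n (fun i => (p i).1)
  refine ⟨SeparationQuotient.mk ⟨l, fun i => ((F i).map (hl i).some).1 (p i).2⟩, ?_⟩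
  rw [phi_mk]
  funext i
  exact (mk_map (F i) (hl i).some (p i).2).trans (hp i)

lemma phi_injective : Function.Injective (phi F) := fun x y h =>
  eq_of_edist_eq_zero (by rw [← phi_edist F x y, h, edist_self])

/-- The comparison as an equivalence. -/
noncomputable def phiEquiv :
    SeparationQuotient (Pre (MetCat.prodDiagram F)) ≃ ∀ i, SeparationQuotient (Pre (F i)) :=
  Equiv.ofBijective (phi F) ⟨phi_injective F, phi_surjective F⟩

/-- The comparison as an isomorphism in `Met`. -/
noncomputable def phiIso :
    (colimitCocone (MetCat.prodDiagram F)).pt ≅ (MetCat.prodCocone fun i => colimitCocone (F i)).pt where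
  hom := ⟨phi F, LipschitzWith.of_edist_le fun x y => (phi_edist F x y).le⟩
  inv := ⟨(phiEquiv F).symm, LipschitzWith.of_edist_le fun x y => le_of_eq <| by
    calc edist ((phiEquiv F).symm x) ((phiEquiv F).symm y)
        = edist (phi F ((phiEquiv F).symm x)) (phi F ((phiEquiv F).symm y)) :=
          (phi_edist F _ _).symm
      _ = edist x y := congrArg₂ edist ((phiEquiv F).apply_symm_apply x)
          ((phiEquiv F).apply_symm_apply y)⟩
  hom_inv_id := by
    apply Subtype.ext
    funext x
    exact (phiEquiv F).symm_apply_apply x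
  inv_hom_id := by
    apply Subtype.ext
    funext x
    exact (phiEquiv F).apply_symm_apply x

/-- The product of the explicit colimit cocones is a colimit of the product diagram. -/
noncomputable def prodExplicitIsColimit :
    IsColimit (MetCat.prodCocone fun i => colimitCocone (F i)) :=
  IsColimit.ofIsoColimit (colimitIsColimit (MetCat.prodDiagram F))
    (Cocones.ext (phiIso F) (fun j => by
      apply Subtype.ext
      funext x
      rw [show ((colimitCocone (MetCat.prodDiagram F)).ι.app j ≫ (phiIso F).hom).1 x
          = phi F (SeparationQuotient.mk ⟨j, x⟩) from rfl, phi_mk]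
      rfl))

end MetAux

/-- In `Met`, finite products commute with filtered colimits: for every
finite family of filtered diagrams, the product of the colimits is the colimit of the
(pointwise) products, i.e. the canonical comparison is an isomorphism. -/
theorem Met_finite_products_commute_with_filtered_colimits
    (J : Type) [SmallCategory J] [IsFiltered J] (n : ℕ)
    (F : Fin n → J ⥤ MetCat) (c : ∀ i, Cocone (F i))
    (hc : ∀ i, Nonempty (IsColimit (c i))) :
    Nonempty (IsColimit (MetCat.prodCocone c)) := by
  classical
  let e : ∀ i, MetAux.colimitCocone (F i) ≅ c i := fun i =>
    IsColimit.uniqueUpToIso (MetAux.colimitIsColimit (F i)) (hc i).some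
  refine ⟨IsColimit.ofIsoColimit (MetAux.prodExplicitIsColimit F) ?_⟩
  refine Cocones.ext ?_ (fun j => ?_)
  · exact
      { hom := MetCat.piMap fun i => (e i).hom.hom
        inv := MetCat.piMap fun i => (e i).inv.hom
        hom_inv_id := by
          apply Subtype.ext
          funext x
          funext i
          exact congrFun (congrArg Subtype.val
            (congrArg (fun (f : MetAux.colimitCocone (F i) ⟶ MetAux.colimitCocone (F i)) =>
              f.hom) (e i).hom_inv_id)) (x i)
        inv_hom_id := by
          apply Subtype.ext
          funext x
          funext i
          exact congrFun (congrArg Subtype.val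
            (congrArg (fun (f : c i ⟶ c i) => f.hom) (e i).inv_hom_id)) (x i) }
  · apply Subtype.ext
    funext x
    funext i
    exact congrFun (congrArg Subtype.val ((e i).hom.w j)) (x i)
end

section
/- Let A be a finite discrete generalized metric space (all distances between distinct points equal ∞). Then the enriched hom-functor Met(A,−) : Met → Met preserves filtered colimits; in particular, A is finitely presentable in the enriched sense. -/
open CategoryTheory CategoryTheory.Limits

/-- The sup-metric on the set of nonexpanding maps `X → Y`. -/
noncomputable instance MetCat.homEMetric (X Y : MetCat) : EMetricSpace (X ⟶ Y) where
  edist f g := ⨆ x : X.carrier, edist (f.1 x) (g.1 x)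
  edist_self f := by simp
  edist_comm f g := by simp [edist_comm]
  edist_triangle f g h :=
    iSup_le fun x => le_trans (edist_triangle _ (g.1 x) _)
      (add_le_add (le_iSup (fun x => edist (f.1 x) (g.1 x)) x)
        (le_iSup (fun x => edist (g.1 x) (h.1 x)) x))
  eq_of_edist_eq_zero := by
    intro f g h
    apply Subtype.ext
    funext x
    refine eq_of_edist_eq_zero (le_antisymm ?_ zero_le)
    calc edist (f.1 x) (g.1 x) ≤ ⨆ x : X.carrier, edist (f.1 x) (g.1 x) :=
          le_iSup (fun x => edist (f.1 x) (g.1 x)) x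
      _ = 0 := h

/-- The enriched hom-functor `Met(A, -) : Met ⥤ Met`, sending `Y` to the space of
nonexpanding maps `A → Y` with the sup-metric. -/
noncomputable def MetCat.enrichedHom (A : MetCat) : MetCat ⥤ MetCat where
  obj Y := ⟨A ⟶ Y⟩
  map f := ⟨fun g => g ≫ f, LipschitzWith.of_edist_le fun g h => by
    refine iSup_mono fun x => ?_
    exact le_of_le_of_eq (f.2.edist_le_mul (g.1 x) (h.1 x)) (by simp)⟩
  map_id Y := by
    apply Subtype.ext
    funext g
    exact Category.comp_id g
  map_comp f k := by
    apply Subtype.ext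
    funext g
    exact (Category.assoc g f k).symm

namespace MetColim

open SeparationQuotient IsFiltered
open scoped ENNReal

@[simp] lemma MetCat_id_apply (X : MetCat) (x : X.carrier) : (𝟙 X : X ⟶ X).1 x = x := rfl

@[simp] lemma MetCat_comp_apply {X Y Z : MetCat} (f : X ⟶ Y) (g : Y ⟶ Z) (x : X.carrier) :
    (f ≫ g).1 x = g.1 (f.1 x) := rfl

variable {J : Type} [SmallCategory J] [IsFiltered J] (F : J ⥤ MetCat)

@[simp] lemma map_id_apply {j : J} (x : (F.obj j).carrier) : (F.map (𝟙 j)).1 x = x := by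
  rw [F.map_id]; rfl

lemma map_comp_apply {i j k : J} (f : i ⟶ j) (g : j ⟶ k) (x : (F.obj i).carrier) :
    (F.map (f ≫ g)).1 x = (F.map g).1 ((F.map f).1 x) := by
  rw [F.map_comp]; rfl

lemma map_edist_le {i j : J} (f : i ⟶ j) (x y : (F.obj i).carrier) :
    edist ((F.map f).1 x) ((F.map f).1 y) ≤ edist x y := by
  simpa using (F.map f).2.edist_le_mul x y

/-- The underlying type of the filtered colimit: the disjoint union of the stages. -/
structure Pre : Type where
  stage : J
  pt : (F.obj stage).carrier

/-- A cospan over two points of `Pre F`. -/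
def Cospan (a b : Pre F) : Type := Σ k : J, (a.stage ⟶ k) × (b.stage ⟶ k)

instance (a b : Pre F) : Nonempty (Cospan F a b) :=
  ⟨⟨IsFiltered.max a.stage b.stage, leftToMax a.stage b.stage, rightToMax a.stage b.stage⟩⟩

/-- The value of a cospan. -/
noncomputable def cost {a b : Pre F} (p : Cospan F a b) : ℝ≥0∞ :=
  edist ((F.map p.2.1).1 a.pt) ((F.map p.2.2).1 b.pt)

noncomputable instance : PseudoEMetricSpace (Pre F) where
  edist a b := ⨅ p : Cospan F a b, cost F p
  edist_self a := le_antisymm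
    (iInf_le_of_le ⟨a.stage, 𝟙 a.stage, 𝟙 a.stage⟩ (by simp [cost])) zero_le
  edist_comm a b := by
    have key : ∀ (x y : Pre F), (⨅ p : Cospan F x y, cost F p) ≤ ⨅ p : Cospan F y x, cost F p :=
      fun x y => le_iInf fun p =>
        iInf_le_of_le ⟨p.1, p.2.2, p.2.1⟩ (le_of_eq (edist_comm _ _))
    exact le_antisymm (key a b) (key b a)
  edist_triangle a b c := by
    show (⨅ p : Cospan F a c, cost F p) ≤
      (⨅ p : Cospan F a b, cost F p) + ⨅ p : Cospan F b c, cost F p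
    rw [ENNReal.iInf_add]
    refine le_iInf fun p => ?_
    rw [ENNReal.add_iInf]
    refine le_iInf fun q => ?_
    obtain ⟨k, f, g⟩ := p
    obtain ⟨l, g', h⟩ := q
    set m := IsFiltered.max k l with hm
    set α : k ⟶ m := leftToMax k l
    set β : l ⟶ m := rightToMax k l
    set c1 := coeqHom (g ≫ α) (g' ≫ β)
    have hcond : g ≫ α ≫ c1 = g' ≫ β ≫ c1 := by
      simpa only [Category.assoc] using coeq_condition (g ≫ α) (g' ≫ β)
    refine le_trans (iInf_le_of_le ⟨coeq (g ≫ α) (g' ≫ β), f ≫ α ≫ c1, h ≫ β ≫ c1⟩ ?_) le_rfl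
    show edist ((F.map (f ≫ α ≫ c1)).1 a.pt) ((F.map (h ≫ β ≫ c1)).1 c.pt) ≤ _
    calc edist ((F.map (f ≫ α ≫ c1)).1 a.pt) ((F.map (h ≫ β ≫ c1)).1 c.pt)
        ≤ edist ((F.map (f ≫ α ≫ c1)).1 a.pt) ((F.map (g ≫ α ≫ c1)).1 b.pt)
          + edist ((F.map (g ≫ α ≫ c1)).1 b.pt) ((F.map (h ≫ β ≫ c1)).1 c.pt) :=
          edist_triangle _ _ _
      _ ≤ cost F (⟨k, f, g⟩ : Cospan F a b) + cost F (⟨l, g', h⟩ : Cospan F b c) := by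
          refine add_le_add ?_ ?_
          · rw [map_comp_apply F f (α ≫ c1), map_comp_apply F g (α ≫ c1)]
            exact map_edist_le F _ _ _
          · rw [hcond, map_comp_apply F g' (β ≫ c1), map_comp_apply F h (β ≫ c1)]
            exact map_edist_le F _ _ _

lemma pre_edist_def (a b : Pre F) : edist a b = ⨅ p : Cospan F a b, cost F p := rfl

lemma pre_edist_le {a b : Pre F} (p : Cospan F a b) : edist a b ≤ cost F p := iInf_le _ p

/-- The colimit object: the separation quotient of `Pre F`. -/
noncomputable def Q : MetCat := ⟨SeparationQuotient (Pre F)⟩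

lemma mk_eq_of_map {i j : J} (f : i ⟶ j) (x : (F.obj i).carrier) :
    (SeparationQuotient.mk (⟨i, x⟩ : Pre F)) = SeparationQuotient.mk ⟨j, (F.map f).1 x⟩ := by
  refine SeparationQuotient.mk_eq_mk.2 (EMetric.inseparable_iff.2 (le_antisymm ?_ zero_le))
  refine le_trans (pre_edist_le F (⟨j, f, 𝟙 j⟩ : Cospan F ⟨i, x⟩ ⟨j, (F.map f).1 x⟩)) ?_
  simp [cost]

/-- The colimit cocone. -/
noncomputable def colimCocone : Cocone F where
  pt := Q F
  ι :=
    { app := fun j => ⟨fun x => SeparationQuotient.mk ⟨j, x⟩,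
        LipschitzWith.of_edist_le fun x y => by
          refine le_trans (le_of_eq (SeparationQuotient.edist_mk _ _)) ?_
          refine le_trans (pre_edist_le F (⟨j, 𝟙 j, 𝟙 j⟩ : Cospan F ⟨j, x⟩ ⟨j, y⟩)) ?_
          simp [cost]⟩
      naturality := fun i j f => by
        apply Subtype.ext
        funext x
        exact ((mk_eq_of_map F f x).symm : _) }

lemma cocone_app_edist_le (s : Cocone F) (p q : Pre F) :
    edist ((s.ι.app p.stage).1 p.pt) ((s.ι.app q.stage).1 q.pt) ≤ edist p q := by
  refine le_iInf fun r => ?_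
  obtain ⟨k, f, g⟩ := r
  have hp : (s.ι.app p.stage).1 p.pt = (s.ι.app k).1 ((F.map f).1 p.pt) := by
    rw [← s.w f]; rfl
  have hq : (s.ι.app q.stage).1 q.pt = (s.ι.app k).1 ((F.map g).1 q.pt) := by
    rw [← s.w g]; rfl
  rw [hp, hq]
  show _ ≤ cost F (⟨k, f, g⟩ : Cospan F p q)
  simpa [cost] using (s.ι.app k).2.edist_le_mul ((F.map f).1 p.pt) ((F.map g).1 q.pt)

/-- The colimit cocone is a colimit. -/
noncomputable def colimIsColimit : IsColimit (colimCocone F) where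
  desc s := ⟨SeparationQuotient.lift (fun p : Pre F => (s.ι.app p.stage).1 p.pt)
      (fun p q h => by
        refine eq_of_edist_eq_zero (le_antisymm ?_ zero_le)
        refine le_trans (cocone_app_edist_le F s p q) ?_
        exact le_of_eq (EMetric.inseparable_iff.1 h)),
    LipschitzWith.of_edist_le fun x y => by
      obtain ⟨p, rfl⟩ := surjective_mk x
      obtain ⟨q, rfl⟩ := surjective_mk y
      refine le_trans (cocone_app_edist_le F s p q) ?_
      exact le_of_eq (SeparationQuotient.edist_mk _ _).symm⟩
  fac s j := Subtype.ext (funext fun x => rfl)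
  uniq s m hm := by
    apply Subtype.ext
    funext x
    obtain ⟨p, rfl⟩ := surjective_mk x
    have := congrFun (congrArg Subtype.val (hm p.stage)) p.pt
    exact this


section Mapped

variable (A : MetCat) [Finite A.carrier]

lemma discrete_lip (hdisc : ∀ x y : A.carrier, x ≠ y → edist x y = ⊤)
    {X : Type} [PseudoEMetricSpace X] (f : A.carrier → X) : LipschitzWith 1 f :=
  LipschitzWith.of_edist_le fun x y => by
    rcases eq_or_ne x y with rfl | h
    · simp
    · rw [hdisc x y h]; exact le_top

lemma combine {ι : Type} (j k : J) (l : ι → J) (u : ∀ i, j ⟶ l i) (v : ∀ i, k ⟶ l i)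
    (s : Finset ι) : ∃ (m : J) (f : j ⟶ m) (g : k ⟶ m), ∀ i ∈ s,
      ∃ w : l i ⟶ m, u i ≫ w = f ∧ v i ≫ w = g := by
  classical
  induction s using Finset.induction_on with
  | empty => exact ⟨IsFiltered.max j k, leftToMax j k, rightToMax j k, by simp⟩
  | @insert i s hi ih =>
    obtain ⟨m, f, g, H⟩ := ih
    set n := IsFiltered.max (l i) m with hn
    set α : l i ⟶ n := leftToMax (l i) m with hα
    set β : m ⟶ n := rightToMax (l i) m with hβ
    set c1 := coeqHom (u i ≫ α) (f ≫ β) with hc1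
    set c2 := coeqHom (v i ≫ α ≫ c1) (g ≫ β ≫ c1) with hc2
    refine ⟨_, f ≫ β ≫ c1 ≫ c2, g ≫ β ≫ c1 ≫ c2, ?_⟩
    intro i' hi'
    rcases Finset.mem_insert.1 hi' with rfl | hi'
    · refine ⟨α ≫ c1 ≫ c2, ?_, ?_⟩
      · calc u i' ≫ α ≫ c1 ≫ c2 = ((u i' ≫ α) ≫ c1) ≫ c2 := by simp
          _ = ((f ≫ β) ≫ c1) ≫ c2 := by rw [coeq_condition]
          _ = f ≫ β ≫ c1 ≫ c2 := by simp
      · calc v i' ≫ α ≫ c1 ≫ c2 = (v i' ≫ α ≫ c1) ≫ c2 := by simp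
          _ = (g ≫ β ≫ c1) ≫ c2 := coeq_condition _ _
          _ = g ≫ β ≫ c1 ≫ c2 := by simp
    · obtain ⟨w, hw1, hw2⟩ := H i' hi'
      exact ⟨w ≫ β ≫ c1 ≫ c2,
          by simpa using congrArg (fun t => t ≫ β ≫ c1 ≫ c2) hw1,
          by simpa using congrArg (fun t => t ≫ β ≫ c1 ≫ c2) hw2⟩

lemma key_estimate (s : Cocone (F ⋙ MetCat.enrichedHom A)) (j k : J)
    (hj : A ⟶ F.obj j) (hk : A ⟶ F.obj k) :
    edist ((s.ι.app j).1 hj) ((s.ι.app k).1 hk) ≤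
      ⨆ a : A.carrier, edist (⟨j, hj.1 a⟩ : Pre F) ⟨k, hk.1 a⟩ := by
  classical
  letI := Fintype.ofFinite A.carrier
  set D := ⨆ a : A.carrier, edist (⟨j, hj.1 a⟩ : Pre F) ⟨k, hk.1 a⟩ with hD
  refine ENNReal.le_of_forall_pos_le_add fun ε hε hDtop => ?_
  have hch : ∀ a : A.carrier, ∃ p : Cospan F ⟨j, hj.1 a⟩ ⟨k, hk.1 a⟩, cost F p < D + ε := by
    intro a
    have h1 : edist (⟨j, hj.1 a⟩ : Pre F) ⟨k, hk.1 a⟩ < D + ε :=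
      lt_of_le_of_lt (le_iSup (fun a : A.carrier => edist (⟨j, hj.1 a⟩ : Pre F) ⟨k, hk.1 a⟩) a)
        (ENNReal.lt_add_right hDtop.ne (by exact_mod_cast hε.ne'))
    rw [pre_edist_def] at h1
    exact iInf_lt_iff.1 h1
  choose p hp using hch
  obtain ⟨m, f, g, H⟩ := combine (J := J) j k (fun a => (p a).1) (fun a => (p a).2.1)
      (fun a => (p a).2.2) Finset.univ
  have h2 : (s.ι.app j).1 hj = (s.ι.app m).1 (hj ≫ F.map f) := by rw [← s.w f]; rfl
  have h3 : (s.ι.app k).1 hk = (s.ι.app m).1 (hk ≫ F.map g) := by rw [← s.w g]; rfl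
  rw [h2, h3]
  refine le_trans (by simpa using (s.ι.app m).2.edist_le_mul (hj ≫ F.map f) (hk ≫ F.map g)) ?_
  show (⨆ a : A.carrier, edist ((hj ≫ F.map f).1 a) ((hk ≫ F.map g).1 a)) ≤ D + ε
  refine iSup_le fun a => ?_
  obtain ⟨w, hw1, hw2⟩ := H a (Finset.mem_univ a)
  have hle : edist ((hj ≫ F.map f).1 a) ((hk ≫ F.map g).1 a) ≤ cost F (p a) := by
    show edist ((F.map f).1 (hj.1 a)) ((F.map g).1 (hk.1 a)) ≤ _
    rw [← hw1, ← hw2, map_comp_apply, map_comp_apply]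
    exact map_edist_le F w _ _
  exact le_trans hle (le_of_lt (hp a))

lemma exists_bound {ι : Type} [Fintype ι] (o : ι → J) : ∃ j : J, ∀ i, Nonempty (o i ⟶ j) := by
  classical
  have key : ∀ s : Finset ι, ∃ j : J, ∀ i ∈ s, Nonempty (o i ⟶ j) := by
    intro s
    induction s using Finset.induction_on with
    | empty =>
      obtain ⟨j⟩ := (IsFiltered.nonempty : Nonempty J)
      exact ⟨j, by simp⟩
    | @insert i s hi ih =>
      obtain ⟨j, hj⟩ := ih
      refine ⟨IsFiltered.max (o i) j, fun i' hi' => ?_⟩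
      rcases Finset.mem_insert.1 hi' with rfl | hi'
      · exact ⟨leftToMax _ _⟩
      · exact ⟨(hj i' hi').some ≫ rightToMax _ _⟩
  obtain ⟨j, hj⟩ := key Finset.univ
  exact ⟨j, fun i => hj i (Finset.mem_univ i)⟩

lemma exists_lift (hdisc : ∀ x y : A.carrier, x ≠ y → edist x y = ⊤) (g : A ⟶ Q F) :
    ∃ (j : J) (h : A ⟶ F.obj j), ∀ a : A.carrier,
      SeparationQuotient.mk (⟨j, h.1 a⟩ : Pre F) = g.1 a := by
  classical
  letI := Fintype.ofFinite A.carrier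
  have hrep : ∀ a : A.carrier, ∃ p : Pre F, SeparationQuotient.mk p = g.1 a :=
    fun a => surjective_mk _
  choose p hp using hrep
  obtain ⟨j, hb⟩ := exists_bound (J := J) (fun a => (p a).stage)
  refine ⟨j, ⟨fun a => (F.map (hb a).some).1 (p a).pt, discrete_lip A hdisc _⟩, fun a => ?_⟩
  rw [← hp a]
  exact (mk_eq_of_map F (hb a).some (p a).pt).symm

variable (hdisc : ∀ x y : A.carrier, x ≠ y → edist x y = ⊤) in
/-- The stage of a chosen lift of `g : A ⟶ Q F`. -/
noncomputable def liftStage (g : A ⟶ Q F) : J := (exists_lift F A hdisc g).choose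

variable (hdisc : ∀ x y : A.carrier, x ≠ y → edist x y = ⊤) in
/-- The chosen lift of `g : A ⟶ Q F`. -/
noncomputable def liftMap (g : A ⟶ Q F) : A ⟶ F.obj (liftStage F A hdisc g) :=
  (exists_lift F A hdisc g).choose_spec.choose

lemma liftMap_spec (hdisc : ∀ x y : A.carrier, x ≠ y → edist x y = ⊤) (g : A ⟶ Q F) (a : A.carrier) :
    SeparationQuotient.mk (⟨liftStage F A hdisc g, (liftMap F A hdisc g).1 a⟩ : Pre F)
      = g.1 a :=
  (exists_lift F A hdisc g).choose_spec.choose_spec a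

lemma desc_edist_le (s : Cocone (F ⋙ MetCat.enrichedHom A)) {j k : J}
    (hj : A ⟶ F.obj j) (hk : A ⟶ F.obj k) (g g' : A ⟶ Q F)
    (h1 : ∀ a, SeparationQuotient.mk (⟨j, hj.1 a⟩ : Pre F) = g.1 a)
    (h2 : ∀ a, SeparationQuotient.mk (⟨k, hk.1 a⟩ : Pre F) = g'.1 a) :
    edist ((s.ι.app j).1 hj) ((s.ι.app k).1 hk) ≤ edist g g' := by
  refine le_trans (key_estimate F A s j k hj hk) ?_
  refine iSup_le fun a => ?_
  have heq : edist (⟨j, hj.1 a⟩ : Pre F) ⟨k, hk.1 a⟩ = edist (g.1 a) (g'.1 a) := by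
    rw [← h1 a, ← h2 a]
    exact (SeparationQuotient.edist_mk _ _).symm
  rw [heq]
  exact le_iSup (fun x => edist (g.1 x) (g'.1 x)) a

/-- The mapped cocone is a colimit. -/
noncomputable def mappedIsColimit (hdisc : ∀ x y : A.carrier, x ≠ y → edist x y = ⊤) :
    IsColimit ((MetCat.enrichedHom A).mapCocone (colimCocone F)) where
  desc s := ⟨fun g => (s.ι.app (liftStage F A hdisc g)).1 (liftMap F A hdisc g),
    LipschitzWith.of_edist_le fun g g' =>
      desc_edist_le F A s _ _ g g' (liftMap_spec F A hdisc g) (liftMap_spec F A hdisc g')⟩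
  fac s j := by
    apply Subtype.ext
    funext h
    have h2 : ∀ a, SeparationQuotient.mk (⟨j, h.1 a⟩ : Pre F)
        = (h ≫ (colimCocone F).ι.app j).1 a := fun a => rfl
    show (s.ι.app (liftStage F A hdisc (h ≫ (colimCocone F).ι.app j))).1
        (liftMap F A hdisc (h ≫ (colimCocone F).ι.app j)) = (s.ι.app j).1 h
    refine eq_of_edist_eq_zero (le_antisymm ?_ zero_le)
    have hle := desc_edist_le F A s (liftMap F A hdisc (h ≫ (colimCocone F).ι.app j)) h
      (h ≫ (colimCocone F).ι.app j) (h ≫ (colimCocone F).ι.app j)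
      (liftMap_spec F A hdisc (h ≫ (colimCocone F).ι.app j)) h2
    simpa using hle
  uniq s mfun hm := by
    apply Subtype.ext
    funext g
    have hg : g = (liftMap F A hdisc g) ≫ (colimCocone F).ι.app (liftStage F A hdisc g) := by
      apply Subtype.ext
      funext a
      exact (liftMap_spec F A hdisc g a).symm
    have h1 := congrFun (congrArg Subtype.val (hm (liftStage F A hdisc g)))
        (liftMap F A hdisc g)
    show mfun.1 g = (s.ι.app (liftStage F A hdisc g)).1 (liftMap F A hdisc g)
    conv_lhs => rw [hg]
    exact h1

end Mapped

end MetColim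


/-- If `A` is a finite discrete generalized metric space (all distances
between distinct points are `∞`), then the enriched hom-functor `Met(A,-) : Met ⥤ Met`
preserves filtered colimits; in particular `A` is finitely presentable in the enriched
sense. -/
theorem enrichedHom_of_finite_discrete_preserves_filtered_colimits
    (A : MetCat) [Finite A.carrier]
    (hdisc : ∀ x y : A.carrier, x ≠ y → edist x y = ⊤)
    (J : Type) [SmallCategory J] [IsFiltered J] :
    Nonempty (PreservesColimitsOfShape J (MetCat.enrichedHom A)) := by
  exact ⟨⟨fun {F} => preservesColimit_of_preserves_colimit_cocone
    (MetColim.colimIsColimit F) (MetColim.mappedIsColimit F A hdisc)⟩⟩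
end

section
/- The forgetful functor V : Norm → Met from the category of generalized normed complex vector spaces and linear maps of norm ≤ 1 to the category of generalized metric spaces and nonexpanding maps is monadic. -/
open CategoryTheory CategoryTheory.Limits ENNReal NNReal

/-- A generalized normed complex vector space: the norm takes values in `[0,∞]`. -/
structure NormCat : Type 1 where
  /-- the underlying type -/
  carrier : Type
  [addCommGroup : AddCommGroup carrier]
  [module : Module ℂ carrier]
  /-- the (extended) norm -/
  enorm : carrier → ℝ≥0∞
  enorm_eq_zero : ∀ x : carrier, enorm x = 0 ↔ x = 0
  enorm_add : ∀ x y : carrier, enorm (x + y) ≤ enorm x + enorm y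
  enorm_smul : ∀ (c : ℂ) (x : carrier), enorm (c • x) = (‖c‖₊ : ℝ≥0∞) * enorm x

attribute [instance] NormCat.addCommGroup NormCat.module

/-- Morphisms of generalized normed spaces: linear maps of norm `≤ 1`. -/
instance : Category NormCat where
  Hom A B := {f : A.carrier →ₗ[ℂ] B.carrier // ∀ x, B.enorm (f x) ≤ A.enorm x}
  id A := ⟨LinearMap.id, fun x => le_rfl⟩
  comp f g := ⟨g.1.comp f.1, fun x => le_trans (g.2 (f.1 x)) (f.2 x)⟩
  id_comp f := Subtype.ext (LinearMap.comp_id f.1)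
  comp_id f := Subtype.ext (LinearMap.id_comp f.1)
  assoc f g h := Subtype.ext (LinearMap.comp_assoc f.1 g.1 h.1).symm

/-- The metric induced by a generalized norm: `d(x,y) = ‖x - y‖`. -/
noncomputable def NormCat.emetric (A : NormCat) : EMetricSpace A.carrier where
  edist x y := A.enorm (x - y)
  edist_self x := by
    show A.enorm (x - x) = 0
    rw [sub_self]
    exact (A.enorm_eq_zero 0).mpr rfl
  edist_comm x y := by
    show A.enorm (x - y) = A.enorm (y - x)
    calc A.enorm (x - y) = A.enorm ((-1 : ℂ) • (y - x)) := by
          rw [neg_one_smul, neg_sub]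
      _ = (‖(-1 : ℂ)‖₊ : ℝ≥0∞) * A.enorm (y - x) := A.enorm_smul _ _
      _ = A.enorm (y - x) := by
          rw [nnnorm_neg, nnnorm_one]
          simp
  edist_triangle x y z := by
    show A.enorm (x - z) ≤ A.enorm (x - y) + A.enorm (y - z)
    calc A.enorm (x - z) = A.enorm ((x - y) + (y - z)) := by rw [sub_add_sub_cancel]
      _ ≤ A.enorm (x - y) + A.enorm (y - z) := A.enorm_add _ _
  eq_of_edist_eq_zero := by
    intro x y h
    have : x - y = 0 := (A.enorm_eq_zero (x - y)).mp h
    exact sub_eq_zero.mp this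

/-- The forgetful functor `Norm ⥤ Met`, sending a generalized normed space to its
underlying generalized metric space with `d(x,y) = ‖x - y‖`. -/
noncomputable def normForget : NormCat ⥤ MetCat where
  obj A := @MetCat.mk A.carrier A.emetric
  map {A B} f := ⟨fun x => f.1 x,
    @LipschitzWith.of_edist_le A.carrier B.carrier
      A.emetric.toPseudoEMetricSpace B.emetric.toPseudoEMetricSpace
      (fun x => f.1 x) (fun x y => by
        have h := f.2 (x - y)
        rw [map_sub] at h
        exact h)⟩
  map_id A := Subtype.ext rfl
  map_comp f g := Subtype.ext rfl
noncomputable section NormMonadicAux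

namespace NormMonadic

open Finsupp

/-- Expand a list of weighted point-pairs into a formal linear combination. -/
def expand (X : MetCat) (l : List (ℂ × X.carrier × X.carrier)) : X.carrier →₀ ℂ :=
  (l.map fun p => p.1 • (Finsupp.single p.2.1 (1 : ℂ) - Finsupp.single p.2.2 (1 : ℂ))).sum

/-- The transport cost of a list of weighted point-pairs. -/
def cost (X : MetCat) (l : List (ℂ × X.carrier × X.carrier)) : ℝ≥0∞ :=
  (l.map fun p => (‖p.1‖₊ : ℝ≥0∞) * edist p.2.1 p.2.2).sum

@[simp] lemma expand_nil (X : MetCat) : expand X [] = 0 := rfl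

@[simp] lemma cost_nil (X : MetCat) : cost X [] = 0 := rfl

@[simp] lemma expand_cons (X : MetCat) (p) (l) :
    expand X (p :: l) =
      p.1 • (Finsupp.single p.2.1 (1 : ℂ) - Finsupp.single p.2.2 (1 : ℂ)) + expand X l := by
  simp [expand]

@[simp] lemma cost_cons (X : MetCat) (p) (l) :
    cost X (p :: l) = (‖p.1‖₊ : ℝ≥0∞) * edist p.2.1 p.2.2 + cost X l := by
  simp [cost]

lemma expand_append (X : MetCat) (l₁ l₂) :
    expand X (l₁ ++ l₂) = expand X l₁ + expand X l₂ := by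
  induction l₁ with
  | nil => simp
  | cons p t ih => simp [ih, add_assoc]

lemma cost_append (X : MetCat) (l₁ l₂) :
    cost X (l₁ ++ l₂) = cost X l₁ + cost X l₂ := by
  induction l₁ with
  | nil => simp
  | cons p t ih => simp [ih, add_assoc]

/-- The free (generalized) norm on formal linear combinations. -/
def fnorm (X : MetCat) (a : X.carrier →₀ ℂ) : ℝ≥0∞ :=
  ⨅ l : { l : List (ℂ × X.carrier × X.carrier) // expand X l = a }, cost X l.1

lemma fnorm_le {X : MetCat} {a : X.carrier →₀ ℂ} {l} (h : expand X l = a) :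
    fnorm X a ≤ cost X l :=
  iInf_le _ (⟨l, h⟩ : { l // expand X l = a })

@[simp] lemma fnorm_zero (X : MetCat) : fnorm X 0 = 0 :=
  le_antisymm (by simpa using fnorm_le (X := X) (l := []) rfl) (zero_le)

lemma fnorm_add_le (X : MetCat) (a b : X.carrier →₀ ℂ) :
    fnorm X (a + b) ≤ fnorm X a + fnorm X b := by
  conv_rhs => rw [fnorm, ENNReal.iInf_add]
  refine le_iInf fun l₁ => ?_
  conv_rhs => rw [fnorm, ENNReal.add_iInf]
  refine le_iInf fun l₂ => ?_
  refine (fnorm_le (l := l₁.1 ++ l₂.1) ?_).trans (le_of_eq (cost_append _ _ _))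
  rw [expand_append, l₁.2, l₂.2]

lemma expand_smul (X : MetCat) (c : ℂ) (l) :
    expand X (l.map fun p => (c * p.1, p.2)) = c • expand X l := by
  induction l with
  | nil => simp
  | cons p t ih => simp [ih, mul_smul, smul_add]

lemma cost_smul (X : MetCat) (c : ℂ) (l) :
    cost X (l.map fun p => (c * p.1, p.2)) = (‖c‖₊ : ℝ≥0∞) * cost X l := by
  induction l with
  | nil => simp
  | cons p t ih =>
    simp only [List.map_cons, cost_cons, ih, nnnorm_mul, ENNReal.coe_mul, mul_add, mul_assoc]

lemma fnorm_smul_le (X : MetCat) (c : ℂ) (a : X.carrier →₀ ℂ) :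
    fnorm X (c • a) ≤ (‖c‖₊ : ℝ≥0∞) * fnorm X a := by
  rcases eq_or_ne c 0 with rfl | hc
  · simp
  · conv_rhs => rw [fnorm]
    rw [ENNReal.mul_iInf_of_ne (by simpa using hc) ENNReal.coe_ne_top]
    refine le_iInf fun l => ?_
    refine (fnorm_le (l := l.1.map fun p => (c * p.1, p.2)) ?_).trans
      (le_of_eq (cost_smul _ _ _))
    rw [expand_smul, l.2]

lemma fnorm_smul (X : MetCat) (c : ℂ) (a : X.carrier →₀ ℂ) :
    fnorm X (c • a) = (‖c‖₊ : ℝ≥0∞) * fnorm X a := by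
  rcases eq_or_ne c 0 with rfl | hc
  · simp
  · refine le_antisymm (fnorm_smul_le X c a) ?_
    have h := fnorm_smul_le X c⁻¹ (c • a)
    rw [inv_smul_smul₀ hc] at h
    calc (‖c‖₊ : ℝ≥0∞) * fnorm X a
        ≤ (‖c‖₊ : ℝ≥0∞) * ((‖c⁻¹‖₊ : ℝ≥0∞) * fnorm X (c • a)) := by
          exact mul_le_mul_right h _
      _ = fnorm X (c • a) := by
          rw [nnnorm_inv, ENNReal.coe_inv (by simpa using hc), ← mul_assoc,
            ENNReal.mul_inv_cancel (by simpa using hc) ENNReal.coe_ne_top, one_mul]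

lemma fnorm_single_sub_le (X : MetCat) (x y : X.carrier) :
    fnorm X (Finsupp.single x (1 : ℂ) - Finsupp.single y (1 : ℂ)) ≤ edist x y := by
  refine (fnorm_le (l := [(1, x, y)]) ?_).trans ?_
  · simp
  · simp

/-- Pairing/test-function bound: any function into a "seminormed" module which is
nonexpanding on points extends to a map dominated by `fnorm`. -/
lemma fnorm_pair {X : MetCat} {E : Type} [AddCommGroup E] [Module ℂ E] (N : E → ℝ≥0∞)
    (Nadd : ∀ u v, N (u + v) ≤ N u + N v)
    (Nsmul : ∀ (c : ℂ) u, N (c • u) = (‖c‖₊ : ℝ≥0∞) * N u)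
    (f : X.carrier → E) (hf : ∀ x y, N (f x - f y) ≤ edist x y) (a : X.carrier →₀ ℂ) :
    N (Finsupp.linearCombination ℂ f a) ≤ fnorm X a := by
  have Nzero : N 0 = 0 := by
    have := Nsmul 0 0
    simpa using this
  have main : ∀ l, N (Finsupp.linearCombination ℂ f (expand X l)) ≤ cost X l := by
    intro l
    induction l with
    | nil => simpa using Nzero.le
    | cons p t ih =>
      rw [expand_cons, map_add, map_smul, map_sub]
      refine (Nadd _ _).trans (add_le_add ?_ ih)
      rw [Nsmul]
      refine mul_le_mul_right ?_ _
      simpa [Finsupp.linearCombination_single] using hf p.2.1 p.2.2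
  refine le_iInf fun l => ?_
  have := main l.1
  rwa [l.2] at this

end NormMonadic
namespace NormMonadic

open Finsupp

lemma fnorm_eq_zero {X : MetCat} (a : X.carrier →₀ ℂ) : fnorm X a = 0 ↔ a = 0 := by
  constructor
  · intro h
    by_contra ha
    classical
    obtain ⟨x₀, hx₀⟩ : ∃ x, a x ≠ 0 := by
      by_contra hall
      push_neg at hall
      exact ha (Finsupp.ext hall)
    set r : ℝ≥0∞ := min 1 ((a.support.erase x₀).inf fun y => edist x₀ y) with hr
    have hr0 : 0 < r := by
      refine lt_min one_pos ?_
      refine (Finset.lt_inf_iff (by exact ENNReal.zero_lt_top)).2 fun y hy => ?_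
      exact edist_pos.2 fun hxy => (Finset.ne_of_mem_erase hy) hxy.symm
    have hrt : r ≠ ∞ := ne_top_of_le_ne_top ENNReal.one_ne_top (min_le_left _ _)
    set f : X.carrier → ℂ := fun z => (((r - edist x₀ z).toReal : ℝ) : ℂ) with hf
    have hsub : ∀ z, r - edist x₀ z ≠ ∞ := fun z => ne_top_of_le_ne_top hrt tsub_le_self
    have hlip : ∀ z w : X.carrier, (‖f z - f w‖₊ : ℝ≥0∞) ≤ edist z w := by
      intro z w
      rcases eq_or_ne (edist z w) ∞ with hD | hD
      · rw [hD]; exact le_top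
      have key : ∀ u v : X.carrier, edist u v ≠ ∞ →
          (r - edist x₀ u).toReal - (r - edist x₀ v).toReal ≤ (edist u v).toReal := by
        intro u v hUV
        have h1 : r - edist x₀ u ≤ (r - edist x₀ v) + (edist x₀ v - edist x₀ u) :=
          tsub_le_tsub_add_tsub
        have h2 : edist x₀ v - edist x₀ u ≤ edist u v := by
          rw [tsub_le_iff_left]
          exact (edist_triangle x₀ u v).trans (by rw [edist_comm u v])
        have h3 : r - edist x₀ u ≤ (r - edist x₀ v) + edist u v :=
          h1.trans (add_le_add le_rfl h2)
        have := ENNReal.toReal_mono (by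
          exact ENNReal.add_ne_top.2 ⟨hsub v, hUV⟩) h3
        rw [ENNReal.toReal_add (hsub v) hUV] at this
        linarith
      have habs : |(r - edist x₀ z).toReal - (r - edist x₀ w).toReal| ≤ (edist z w).toReal := by
        rw [abs_sub_le_iff]
        refine ⟨key z w hD, (key w z (by rwa [edist_comm])).trans (le_of_eq (by rw [edist_comm]))⟩
      have : f z - f w = (((r - edist x₀ z).toReal - (r - edist x₀ w).toReal : ℝ) : ℂ) := by
        simp [hf]
      rw [this]
      rw [← ENNReal.ofReal_coe_nnreal, coe_nnnorm]
      rw [Complex.norm_real, Real.norm_eq_abs]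
      calc ENNReal.ofReal |(r - edist x₀ z).toReal - (r - edist x₀ w).toReal|
          ≤ ENNReal.ofReal (edist z w).toReal := ENNReal.ofReal_le_ofReal habs
        _ = edist z w := ENNReal.ofReal_toReal hD
    have hpair := fnorm_pair (X := X) (E := ℂ) (fun u => (‖u‖₊ : ℝ≥0∞))
      (fun u v => by
        show (‖u + v‖₊ : ℝ≥0∞) ≤ (‖u‖₊ : ℝ≥0∞) + (‖v‖₊ : ℝ≥0∞)
        exact_mod_cast nnnorm_add_le u v)
      (fun c u => by
        show (‖c • u‖₊ : ℝ≥0∞) = (‖c‖₊ : ℝ≥0∞) * (‖u‖₊ : ℝ≥0∞)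
        rw [smul_eq_mul]; push_cast [nnnorm_mul]; ring)
      f hlip a
    have hval : Finsupp.linearCombination ℂ f a = a x₀ • f x₀ := by
      rw [Finsupp.linearCombination_apply]
      refine Finsupp.sum_eq_single x₀ (fun b hb hbx => ?_) (fun h => by simp)
      have hbmem : b ∈ a.support.erase x₀ := Finset.mem_erase.2 ⟨hbx, Finsupp.mem_support_iff.2 hb⟩
      have hrb : r ≤ edist x₀ b := (min_le_right _ _).trans (Finset.inf_le hbmem)
      have : r - edist x₀ b = 0 := tsub_eq_zero_of_le hrb
      simp [hf, this]
    have hfx₀ : f x₀ = ((r.toReal : ℝ) : ℂ) := by simp [hf]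
    have hpos : (0 : ℝ≥0∞) < (‖Finsupp.linearCombination ℂ f a‖₊ : ℝ≥0∞) := by
      rw [hval, hfx₀, smul_eq_mul]
      have : a x₀ * ((r.toReal : ℝ) : ℂ) ≠ 0 := by
        refine mul_ne_zero hx₀ ?_
        exact_mod_cast (ENNReal.toReal_pos hr0.ne' hrt).ne'
      simpa using this
    rw [h] at hpair
    exact absurd (le_antisymm hpair (zero_le)) hpos.ne'
  · rintro rfl; exact fnorm_zero X

/-- The free generalized normed space on a generalized metric space. -/
def FreeN (X : MetCat) : NormCat where
  carrier := X.carrier →₀ ℂ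
  enorm := fnorm X
  enorm_eq_zero := fnorm_eq_zero
  enorm_add := fnorm_add_le X
  enorm_smul := fun c a => fnorm_smul X c a

lemma expand_map {X Y : MetCat} (φ : X ⟶ Y) (l) :
    Finsupp.lmapDomain ℂ ℂ φ.1 (expand X l)
      = expand Y (l.map fun p => (p.1, φ.1 p.2.1, φ.1 p.2.2)) := by
  induction l with
  | nil => simp
  | cons p t ih =>
    rw [expand_cons, map_add, map_smul, map_sub, List.map_cons, expand_cons, ih]
    congr 1
    simp [Finsupp.lmapDomain_apply, Finsupp.mapDomain_single]

lemma cost_map {X Y : MetCat} (φ : X ⟶ Y) (l) :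
    cost Y (l.map fun p => (p.1, φ.1 p.2.1, φ.1 p.2.2)) ≤ cost X l := by
  induction l with
  | nil => simp
  | cons p t ih =>
    rw [List.map_cons, cost_cons, cost_cons]
    refine add_le_add (mul_le_mul_right ?_ _) ih
    simpa using φ.2 p.2.1 p.2.2

lemma fnorm_mapDomain {X Y : MetCat} (φ : X ⟶ Y) (a : X.carrier →₀ ℂ) :
    fnorm Y (Finsupp.mapDomain φ.1 a) ≤ fnorm X a := by
  refine le_iInf fun l => ?_
  refine (fnorm_le ?_).trans (cost_map φ l.1)
  rw [← expand_map, l.2]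
  rfl

/-- The free functor `Met ⥤ Norm`. -/
def freeFunctor : MetCat ⥤ NormCat where
  obj X := FreeN X
  map {X Y} φ := ⟨Finsupp.lmapDomain ℂ ℂ φ.1, fun a => fnorm_mapDomain φ a⟩
  map_id X := Subtype.ext (by
    refine Finsupp.lhom_ext fun x c => ?_
    show Finsupp.mapDomain (id : X.carrier → X.carrier) (Finsupp.single x c)
      = Finsupp.single x c
    simp [Finsupp.mapDomain_single])
  map_comp {X Y Z} φ ψ := Subtype.ext (by
    refine Finsupp.lhom_ext fun x c => ?_
    show Finsupp.mapDomain (fun z => ψ.1 (φ.1 z)) (Finsupp.single x c)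
      = Finsupp.mapDomain ψ.1 (Finsupp.mapDomain φ.1 (Finsupp.single x c))
    simp [Finsupp.mapDomain_single])

end NormMonadic
namespace NormMonadic

instance (A : NormCat) : AddCommGroup (normForget.obj A).carrier := A.addCommGroup
instance (A : NormCat) : Module ℂ (normForget.obj A).carrier := A.module

/-- Restricting a norm-≤-1 linear map on the free space along the unit. -/
def toMet {X : MetCat} {A : NormCat} (φ : freeFunctor.obj X ⟶ A) : X ⟶ normForget.obj A :=
  ⟨fun x => φ.1 (Finsupp.single x 1),
    @LipschitzWith.of_edist_le X.carrier A.carrier _ A.emetric.toPseudoEMetricSpace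
      (fun x => φ.1 (Finsupp.single x 1))
      (fun x y => by
        have h1 : A.enorm (φ.1 (Finsupp.single x 1) - φ.1 (Finsupp.single y 1))
            ≤ fnorm X (Finsupp.single x (1 : ℂ) - Finsupp.single y (1 : ℂ)) := by
          exact (congrArg A.enorm (map_sub φ.1 (Finsupp.single x (1 : ℂ)) (Finsupp.single y 1))).symm.le.trans (φ.2 _)
        exact h1.trans (fnorm_single_sub_le X x y))⟩

/-- Extending a nonexpanding map to the free space. -/
def toNorm {X : MetCat} {A : NormCat} (f : X ⟶ normForget.obj A) : freeFunctor.obj X ⟶ A :=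
  ⟨Finsupp.linearCombination ℂ f.1, fun a =>
    fnorm_pair A.enorm A.enorm_add A.enorm_smul f.1
      (fun x y => by
        have h := f.2 x y
        simp only [ENNReal.coe_one, one_mul] at h
        exact h) a⟩

/-- The hom-set core of the free-forgetful adjunction. -/
def coreHomEquiv : Adjunction.CoreHomEquiv freeFunctor normForget where
  homEquiv X A :=
    { toFun := toMet
      invFun := toNorm
      left_inv := fun φ => Subtype.ext (Finsupp.lhom_ext fun x c => by
        show Finsupp.linearCombination ℂ (fun x => φ.1 (Finsupp.single x 1))
            (Finsupp.single x c) = φ.1 (Finsupp.single x c)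
        rw [Finsupp.linearCombination_single]
        exact (map_smul φ.1 c (Finsupp.single x (1 : ℂ))).symm.trans
          (congrArg (fun v => φ.1 v) (Finsupp.smul_single_one x c)))
      right_inv := fun f => Subtype.ext (funext fun x => by
        show Finsupp.linearCombination ℂ f.1 (Finsupp.single x 1) = f.1 x
        rw [Finsupp.linearCombination_single, one_smul]) }
  homEquiv_naturality_left_symm := fun {X' X A} f g => Subtype.ext (Finsupp.lhom_ext fun x c => by
    show Finsupp.linearCombination ℂ (fun z => g.1 (f.1 z)) (Finsupp.single x c)
      = Finsupp.linearCombination ℂ g.1 (Finsupp.mapDomain f.1 (Finsupp.single x c))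
    rw [Finsupp.mapDomain_single, Finsupp.linearCombination_single,
      Finsupp.linearCombination_single])
  homEquiv_naturality_right := fun {X A B} φ g => Subtype.ext rfl

/-- The free-forgetful adjunction `Met ⇄ Norm`. -/
def adjN : freeFunctor ⊣ normForget := Adjunction.mkOfHomEquiv coreHomEquiv

end NormMonadic
namespace NormMonadic

/-- The structure map of an algebra, as a plain function. -/
def aApp (S : adjN.toMonad.Algebra) : (S.A.carrier →₀ ℂ) → S.A.carrier := S.a.1

lemma aη (S : adjN.toMonad.Algebra) (u : S.A.carrier) : aApp S (Finsupp.single u 1) = u :=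
  congrFun (congrArg Subtype.val S.unit) u

lemma akey (S : adjN.toMonad.Algebra) (W : (S.A.carrier →₀ ℂ) →₀ ℂ) :
    aApp S (Finsupp.mapDomain (aApp S) W)
      = aApp S (Finsupp.linearCombination ℂ _root_.id W) :=
  (congrFun (congrArg Subtype.val S.assoc) W).symm

lemma aApp_edist (S : adjN.toMonad.Algebra) (w₁ w₂ : S.A.carrier →₀ ℂ) :
    edist (aApp S w₁) (aApp S w₂) ≤ fnorm S.A (w₁ - w₂) := by
  have h := S.a.2 w₁ w₂
  simp only [ENNReal.coe_one, one_mul] at h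
  exact h

/-- Zero element extracted from an algebra. -/
def aZero (S : adjN.toMonad.Algebra) : S.A.carrier := aApp S 0

/-- Addition extracted from an algebra. -/
def aAdd (S : adjN.toMonad.Algebra) (u v : S.A.carrier) : S.A.carrier :=
  aApp S (Finsupp.single u 1 + Finsupp.single v 1)

/-- Scalar multiplication extracted from an algebra. -/
def aSMul (S : adjN.toMonad.Algebra) (c : ℂ) (u : S.A.carrier) : S.A.carrier :=
  aApp S (Finsupp.single u c)

/-- Negation extracted from an algebra. -/
def aNeg (S : adjN.toMonad.Algebra) (u : S.A.carrier) : S.A.carrier :=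
  aApp S (Finsupp.single u (-1))

lemma merge_add (S : adjN.toMonad.Algebra) (w₁ w₂ : S.A.carrier →₀ ℂ) :
    aAdd S (aApp S w₁) (aApp S w₂) = aApp S (w₁ + w₂) := by
  have h := akey S (Finsupp.single w₁ 1 + Finsupp.single w₂ 1)
  rw [Finsupp.mapDomain_add, Finsupp.mapDomain_single, Finsupp.mapDomain_single,
    map_add, Finsupp.linearCombination_single, Finsupp.linearCombination_single,
    one_smul, one_smul] at h
  exact h

lemma merge_smul (S : adjN.toMonad.Algebra) (c : ℂ) (w : S.A.carrier →₀ ℂ) :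
    aSMul S c (aApp S w) = aApp S (c • w) := by
  have h := akey S (Finsupp.single w c)
  rw [Finsupp.mapDomain_single, Finsupp.linearCombination_single, id_eq] at h
  exact h

lemma aAdd_comm (S : adjN.toMonad.Algebra) (u v : S.A.carrier) : aAdd S u v = aAdd S v u := by
  rw [aAdd, aAdd, add_comm]

lemma aAdd_assoc (S : adjN.toMonad.Algebra) (u v w : S.A.carrier) :
    aAdd S (aAdd S u v) w = aAdd S u (aAdd S v w) := by
  calc aAdd S (aAdd S u v) w
      = aAdd S (aApp S (Finsupp.single u 1 + Finsupp.single v 1))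
          (aApp S (Finsupp.single w 1)) := by rw [aη]; rfl
    _ = aApp S (Finsupp.single u 1 + Finsupp.single v 1 + Finsupp.single w 1) := merge_add S _ _
    _ = aApp S (Finsupp.single u 1 + (Finsupp.single v 1 + Finsupp.single w 1)) := by
        rw [add_assoc]
    _ = aAdd S (aApp S (Finsupp.single u 1))
          (aApp S (Finsupp.single v 1 + Finsupp.single w 1)) := (merge_add S _ _).symm
    _ = aAdd S u (aAdd S v w) := by rw [aη]; rfl

lemma aZero_add (S : adjN.toMonad.Algebra) (u : S.A.carrier) : aAdd S (aZero S) u = u := by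
  calc aAdd S (aZero S) u = aAdd S (aApp S 0) (aApp S (Finsupp.single u 1)) := by rw [aη]; rfl
    _ = aApp S (0 + Finsupp.single u 1) := merge_add S _ _
    _ = u := by rw [zero_add, aη]

lemma aAdd_zero (S : adjN.toMonad.Algebra) (u : S.A.carrier) : aAdd S u (aZero S) = u := by
  rw [aAdd_comm, aZero_add]

lemma aNeg_add_cancel (S : adjN.toMonad.Algebra) (u : S.A.carrier) :
    aAdd S (aNeg S u) u = aZero S := by
  calc aAdd S (aNeg S u) u
      = aAdd S (aApp S (Finsupp.single u (-1))) (aApp S (Finsupp.single u 1)) := by rw [aη]; rfl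
    _ = aApp S (Finsupp.single u (-1) + Finsupp.single u 1) := merge_add S _ _
    _ = aZero S := by rw [← Finsupp.single_add, neg_add_cancel, Finsupp.single_zero]; rfl

lemma aOne_smul (S : adjN.toMonad.Algebra) (u : S.A.carrier) : aSMul S 1 u = u := aη S u

lemma aMul_smul (S : adjN.toMonad.Algebra) (c d : ℂ) (u : S.A.carrier) :
    aSMul S (c * d) u = aSMul S c (aSMul S d u) := by
  calc aSMul S (c * d) u = aApp S (c • Finsupp.single u d) := by
        rw [Finsupp.smul_single, smul_eq_mul]; rfl
    _ = aSMul S c (aApp S (Finsupp.single u d)) := (merge_smul S _ _).symm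
    _ = aSMul S c (aSMul S d u) := rfl

lemma aSMul_zero (S : adjN.toMonad.Algebra) (c : ℂ) : aSMul S c (aZero S) = aZero S := by
  calc aSMul S c (aZero S) = aSMul S c (aApp S 0) := rfl
    _ = aApp S (c • (0 : S.A.carrier →₀ ℂ)) := merge_smul S _ _
    _ = aZero S := by rw [smul_zero]; rfl

lemma aZero_smul (S : adjN.toMonad.Algebra) (u : S.A.carrier) : aSMul S 0 u = aZero S := by
  rw [aSMul, Finsupp.single_zero]; rfl

lemma aAdd_smul (S : adjN.toMonad.Algebra) (c d : ℂ) (u : S.A.carrier) :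
    aSMul S (c + d) u = aAdd S (aSMul S c u) (aSMul S d u) := by
  calc aSMul S (c + d) u = aApp S (Finsupp.single u c + Finsupp.single u d) := by
        rw [aSMul, Finsupp.single_add]
    _ = aAdd S (aApp S (Finsupp.single u c)) (aApp S (Finsupp.single u d)) :=
        (merge_add S _ _).symm
    _ = aAdd S (aSMul S c u) (aSMul S d u) := rfl

lemma aSMul_add (S : adjN.toMonad.Algebra) (c : ℂ) (u v : S.A.carrier) :
    aSMul S c (aAdd S u v) = aAdd S (aSMul S c u) (aSMul S c v) := by
  calc aSMul S c (aAdd S u v)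
      = aApp S (c • (Finsupp.single u 1 + Finsupp.single v 1)) := merge_smul S _ _
    _ = aApp S (Finsupp.single u c + Finsupp.single v c) := by
        rw [smul_add, Finsupp.smul_single, Finsupp.smul_single, smul_eq_mul, mul_one]
    _ = aAdd S (aApp S (Finsupp.single u c)) (aApp S (Finsupp.single v c)) :=
        (merge_add S _ _).symm
    _ = aAdd S (aSMul S c u) (aSMul S c v) := rfl

/-- The group structure extracted from an algebra. -/
def algGroup (S : adjN.toMonad.Algebra) : AddCommGroup S.A.carrier :=
  letI : Zero S.A.carrier := ⟨aZero S⟩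
  letI : Add S.A.carrier := ⟨aAdd S⟩
  letI : Neg S.A.carrier := ⟨aNeg S⟩
  { add := aAdd S
    zero := aZero S
    neg := aNeg S
    add_assoc := aAdd_assoc S
    zero_add := aZero_add S
    add_zero := aAdd_zero S
    add_comm := aAdd_comm S
    neg_add_cancel := aNeg_add_cancel S
    nsmul := nsmulRec
    zsmul := zsmulRec }

/-- The `ℂ`-module structure extracted from an algebra. -/
def algModule (S : adjN.toMonad.Algebra) :
    @Module ℂ S.A.carrier _ (algGroup S).toAddCommMonoid :=
  letI := algGroup S
  { smul := aSMul S
    one_smul := aOne_smul S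
    mul_smul := aMul_smul S
    smul_zero := aSMul_zero S
    smul_add := aSMul_add S
    add_smul := aAdd_smul S
    zero_smul := aZero_smul S }

lemma aedist_smul_le (S : adjN.toMonad.Algebra) (c : ℂ) (u : S.A.carrier) :
    edist (aSMul S c u) (aZero S) ≤ (‖c‖₊ : ℝ≥0∞) * edist u (aZero S) := by
  have hz : aZero S = aSMul S c (aZero S) := (aSMul_zero S c).symm
  calc edist (aSMul S c u) (aZero S)
      = edist (aApp S (Finsupp.single u c)) (aApp S (Finsupp.single (aZero S) c)) := by
        conv_lhs => rw [hz]
        rfl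
    _ ≤ fnorm S.A (Finsupp.single u c - Finsupp.single (aZero S) c) := aApp_edist S _ _
    _ = fnorm S.A (c • (Finsupp.single u (1 : ℂ) - Finsupp.single (aZero S) (1 : ℂ))) := by
        rw [smul_sub, Finsupp.smul_single, Finsupp.smul_single, smul_eq_mul, mul_one]
    _ = (‖c‖₊ : ℝ≥0∞) * fnorm S.A (Finsupp.single u 1 - Finsupp.single (aZero S) 1) :=
        fnorm_smul _ _ _
    _ ≤ (‖c‖₊ : ℝ≥0∞) * edist u (aZero S) :=
        mul_le_mul_right (fnorm_single_sub_le _ _ _) _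

lemma aedist_smul (S : adjN.toMonad.Algebra) (c : ℂ) (u : S.A.carrier) :
    edist (aSMul S c u) (aZero S) = (‖c‖₊ : ℝ≥0∞) * edist u (aZero S) := by
  rcases eq_or_ne c 0 with rfl | hc
  · rw [aZero_smul]
    simp
  · refine le_antisymm (aedist_smul_le S c u) ?_
    have h := aedist_smul_le S c⁻¹ (aSMul S c u)
    rw [← aMul_smul, inv_mul_cancel₀ hc, aOne_smul] at h
    calc (‖c‖₊ : ℝ≥0∞) * edist u (aZero S)
        ≤ (‖c‖₊ : ℝ≥0∞) * ((‖c⁻¹‖₊ : ℝ≥0∞) * edist (aSMul S c u) (aZero S)) :=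
          mul_le_mul_right h _
      _ = edist (aSMul S c u) (aZero S) := by
          rw [nnnorm_inv, ENNReal.coe_inv (by simpa using hc), ← mul_assoc,
            ENNReal.mul_inv_cancel (by simpa using hc) ENNReal.coe_ne_top, one_mul]

lemma aedist_add (S : adjN.toMonad.Algebra) (u v : S.A.carrier) :
    edist (aAdd S u v) (aZero S) ≤ edist u (aZero S) + edist v (aZero S) := by
  have hz : aZero S = aAdd S (aZero S) (aZero S) := (aZero_add S (aZero S)).symm
  calc edist (aAdd S u v) (aZero S)
      = edist (aApp S (Finsupp.single u 1 + Finsupp.single v 1))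
          (aApp S (Finsupp.single (aZero S) 1 + Finsupp.single (aZero S) 1)) := by
        conv_lhs => rw [hz]
        rfl
    _ ≤ fnorm S.A ((Finsupp.single u 1 + Finsupp.single v 1)
          - (Finsupp.single (aZero S) 1 + Finsupp.single (aZero S) 1)) := aApp_edist S _ _
    _ ≤ fnorm S.A (Finsupp.single u 1 - Finsupp.single (aZero S) 1)
          + fnorm S.A (Finsupp.single v 1 - Finsupp.single (aZero S) 1) := by
        have h := fnorm_add_le S.A
          (Finsupp.single u 1 - Finsupp.single (aZero S) 1)
          (Finsupp.single v 1 - Finsupp.single (aZero S) 1)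
        rw [show (Finsupp.single u 1 - Finsupp.single (aZero S) 1)
            + (Finsupp.single v 1 - Finsupp.single (aZero S) 1)
            = (Finsupp.single u 1 + Finsupp.single v 1)
              - (Finsupp.single (aZero S) 1 + Finsupp.single (aZero S) (1 : ℂ)) by abel] at h
        exact h
    _ ≤ edist u (aZero S) + edist v (aZero S) :=
        add_le_add (fnorm_single_sub_le _ _ _) (fnorm_single_sub_le _ _ _)

/-- The generalized normed space extracted from an algebra. -/
def algNorm (S : adjN.toMonad.Algebra) : NormCat where
  carrier := S.A.carrier
  addCommGroup := algGroup S
  module := algModule S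
  enorm := fun u => edist u (aZero S)
  enorm_eq_zero := fun u => edist_eq_zero
  enorm_add := aedist_add S
  enorm_smul := fun c u => aedist_smul S c u

end NormMonadic
namespace NormMonadic

instance : normForget.Faithful where
  map_injective {A B} f g w :=
    Subtype.ext (LinearMap.ext fun x => congrFun (congrArg Subtype.val w) x)

/-- Evaluation of a formal linear combination in a normed space. -/
def evalA (A : NormCat) : (A.carrier →₀ ℂ) → A.carrier :=
  Finsupp.linearCombination ℂ (fun x => x)

lemma evalA_zero (A : NormCat) : evalA A 0 = 0 := map_zero _

lemma evalA_add (A : NormCat) (a b : A.carrier →₀ ℂ) : evalA A (a + b) = evalA A a + evalA A b :=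
  map_add _ _ _

lemma evalA_single (A : NormCat) (x : A.carrier) (c : ℂ) : evalA A (Finsupp.single x c) = c • x :=
  Finsupp.linearCombination_single _ _ _

instance : (Monad.comparison adjN).Full where
  map_surjective {A B} f := by
    let φ : A.carrier → B.carrier := f.f.1
    have hcom : ∀ w : A.carrier →₀ ℂ,
        evalA B (Finsupp.mapDomain φ w) = φ (evalA A w) :=
      fun w => congrFun (congrArg Subtype.val f.h) w
    have hzero : φ 0 = 0 := by
      have h := hcom 0
      rw [Finsupp.mapDomain_zero, evalA_zero, evalA_zero] at h
      exact h.symm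
    have hadd : ∀ x y : A.carrier, φ (x + y) = φ x + φ y := by
      intro x y
      have h := hcom (Finsupp.single x 1 + Finsupp.single y 1)
      rw [Finsupp.mapDomain_add, Finsupp.mapDomain_single, Finsupp.mapDomain_single,
        evalA_add, evalA_add, evalA_single, evalA_single, evalA_single, evalA_single,
        one_smul, one_smul, one_smul, one_smul] at h
      exact h.symm
    have hsmul : ∀ (c : ℂ) (x : A.carrier), φ (c • x) = c • φ x := by
      intro c x
      have h := hcom (Finsupp.single x c)
      rw [Finsupp.mapDomain_single, evalA_single, evalA_single] at h
      exact h.symm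
    have hnorm : ∀ x : A.carrier, B.enorm (φ x) ≤ A.enorm x := by
      intro x
      have h := f.f.2 x (0 : A.carrier)
      simp only [ENNReal.coe_one, one_mul] at h
      have h' : B.enorm (φ x - φ 0) ≤ A.enorm (x - 0) := h
      rw [hzero, sub_zero, sub_zero] at h'
      exact h'
    refine ⟨(⟨{ toFun := φ, map_add' := hadd, map_smul' := hsmul }, hnorm⟩ : A ⟶ B), ?_⟩
    apply Monad.Algebra.Hom.ext
    apply Subtype.ext
    rfl

lemma aApp_eq_eval (S : adjN.toMonad.Algebra) (w : S.A.carrier →₀ ℂ) :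
    aApp S w = evalA (algNorm S) w := by
  induction w using Finsupp.induction with
  | zero => exact (evalA_zero (algNorm S)).symm
  | single_add x c w hx hc ih =>
    rw [← merge_add S (Finsupp.single x c) w, ih]
    exact ((evalA_add (algNorm S) (Finsupp.single x c) w).trans
      (congrArg (· + evalA (algNorm S) w) (evalA_single (algNorm S) x c))).symm

lemma algNorm_edist_le (S : adjN.toMonad.Algebra) (a b w : S.A.carrier) :
    edist (aAdd S a w) (aAdd S b w) ≤ edist a b := by
  calc edist (aAdd S a w) (aAdd S b w)
      ≤ fnorm S.A ((Finsupp.single a 1 + Finsupp.single w 1)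
          - (Finsupp.single b 1 + Finsupp.single w 1)) := aApp_edist S _ _
    _ = fnorm S.A (Finsupp.single a 1 - Finsupp.single b 1) := by
        rw [show (Finsupp.single a 1 + Finsupp.single w 1)
            - (Finsupp.single b 1 + Finsupp.single w 1)
            = Finsupp.single a (1 : ℂ) - Finsupp.single b (1 : ℂ) by abel]
    _ ≤ edist a b := fnorm_single_sub_le _ _ _

lemma algNorm_edist (S : adjN.toMonad.Algebra) (u v : S.A.carrier) :
    (algNorm S).emetric.edist u v = edist u v := by
  letI := algGroup S
  letI := algModule S
  have hsub : (u - v : S.A.carrier) = aAdd S u (aNeg S v) := rfl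
  have h1 : (algNorm S).emetric.edist u v = edist (aAdd S u (aNeg S v)) (aZero S) := rfl
  rw [h1]
  refine le_antisymm ?_ ?_
  · have hz : aZero S = aAdd S v (aNeg S v) := by rw [aAdd_comm, aNeg_add_cancel]
    calc edist (aAdd S u (aNeg S v)) (aZero S)
        = edist (aAdd S u (aNeg S v)) (aAdd S v (aNeg S v)) := by rw [← hz]
      _ ≤ edist u v := algNorm_edist_le S _ _ _
  · have h2 : aAdd S (aAdd S u (aNeg S v)) v = u := by
      rw [← hsub]
      exact sub_add_cancel u v
    have h3 : aAdd S (aZero S) v = v := aZero_add S v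
    calc edist u v = edist (aAdd S (aAdd S u (aNeg S v)) v) (aAdd S (aZero S) v) := by
          rw [h2, h3]
      _ ≤ edist (aAdd S u (aNeg S v)) (aZero S) := algNorm_edist_le S _ _ _

/-- The underlying metric iso between the extracted normed space and the algebra. -/
def algIsoMet (S : adjN.toMonad.Algebra) : normForget.obj (algNorm S) ≅ S.A where
  hom := ⟨fun u => u,
    @LipschitzWith.of_edist_le S.A.carrier S.A.carrier
      (algNorm S).emetric.toPseudoEMetricSpace _ (fun u => u)
      (fun u v => le_of_eq (algNorm_edist S u v).symm)⟩
  inv := ⟨fun u => u,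
    @LipschitzWith.of_edist_le S.A.carrier S.A.carrier
      _ (algNorm S).emetric.toPseudoEMetricSpace (fun u => u)
      (fun u v => le_of_eq (algNorm_edist S u v))⟩
  hom_inv_id := Subtype.ext rfl
  inv_hom_id := Subtype.ext rfl

instance : (Monad.comparison adjN).EssSurj where
  mem_essImage S := ⟨algNorm S, ⟨Monad.Algebra.isoMk (algIsoMet S) (by
    refine Subtype.ext (funext fun w => ?_)
    show aApp S (Finsupp.mapDomain (fun u => u) w) = evalA (algNorm S) w
    rw [show Finsupp.mapDomain (fun u => (u : S.A.carrier)) w = w from Finsupp.mapDomain_id]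
    exact aApp_eq_eval S w)⟩⟩

end NormMonadic

/-- The forgetful functor `V : Norm → Met` from generalized normed
complex vector spaces (with linear maps of norm `≤ 1`) to generalized metric spaces
(with nonexpanding maps) is monadic. -/
theorem normForget_monadic : Nonempty (MonadicRightAdjoint normForget) := by
  exact ⟨{ L := NormMonadic.freeFunctor, adj := NormMonadic.adjN,
           eqv := { faithful := inferInstance, full := inferInstance,
                    essSurj := inferInstance } }⟩
end NormMonadicAux
end
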